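/- arXiv:1307.7957 — 14 statements merged into one kernel-verified Lean document; each statement's English description precedes it below -/
import Mathlib

section
/- Let F_m(x) = Σ_{p} A_{m,p} x_p^2 + Σ_{p≠m} B_{m,p} x_m x_p + Σ_{p<q, p≠m, q≠m} C^m_{p,q} x_p x_q + Σ_p D_{m,p} x_p + E_m for m = 1,…,M, and suppose the system x_m' = F_m(x) is kinetic, i.e. A_{m,p} ≥ 0 for p ≠ m, C^m_{p,q} ≥ 0, D_{m,p} ≥ 0 for p ≠ m, and E_m ≥ 0. If V(x) = Σ_m a_m x_m^2 with all a_m > 0 is a first integral (Σ_m a_m x_m F_m(x) = 0 identically), then each F_m has the form F_m(x) = Σ_{p≠m} a_p K_{m,p} x_p^2 − Σ_{p≠m} a_p K_{p,m} x_m x_p for some nonnegative numbers K_{m,p}. -/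
open Finset in
private lemma sum_two' {N : ℕ} (m p : Fin N) (hmp : m ≠ p) (f : Fin N → ℝ)
    (h : ∀ i, i ≠ m → i ≠ p → f i = 0) : ∑ i, f i = f m + f p := by
  rw [← Finset.sum_subset (Finset.subset_univ {m, p})]
  · rw [Finset.sum_insert (by simp [hmp]), Finset.sum_singleton]
  · intro i _ hi
    simp only [Finset.mem_insert, Finset.mem_singleton, not_or] at hi
    exact h i hi.1 hi.2

open Finset in
private lemma sum_three' {N : ℕ} (m p q : Fin N) (hmp : m ≠ p) (hmq : m ≠ q) (hpq : p ≠ q)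
    (f : Fin N → ℝ) (h : ∀ i, i ≠ m → i ≠ p → i ≠ q → f i = 0) :
    ∑ i, f i = f m + f p + f q := by
  rw [← Finset.sum_subset (Finset.subset_univ {m, p, q})]
  · rw [Finset.sum_insert (by simp [hmp, hmq]), Finset.sum_insert (by simp [hpq]),
      Finset.sum_singleton, add_assoc]
  · intro i _ hi
    simp only [Finset.mem_insert, Finset.mem_singleton, not_or] at hi
    exact h i hi.1 hi.2.1 hi.2.2

open Finset in
/-- If the kinetic quadratic system `x_m' = F_m(x)` has the diagonal quadratic
function `V(x) = Σ a_m x_m²` (all `a_m > 0`) as a first integral, then each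
`F_m` has the form `Σ_{p≠m} a_p K_{m,p} x_p² − Σ_{p≠m} a_p K_{p,m} x_m x_p`
with `K_{m,p} ≥ 0`. -/
theorem stmt_2 (M : ℕ)
    (A B D : Fin M → Fin M → ℝ) (C : Fin M → Fin M → Fin M → ℝ)
    (E : Fin M → ℝ) (a : Fin M → ℝ)
    (F : Fin M → (Fin M → ℝ) → ℝ)
    (hF : ∀ m x, F m x =
      (∑ p, A m p * (x p) ^ 2) +
      (∑ p ∈ univ.filter (fun p => p ≠ m), B m p * x m * x p) +
      (∑ p, ∑ q ∈ univ.filter (fun q => p < q ∧ p ≠ m ∧ q ≠ m),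
        C m p q * x p * x q) +
      (∑ p, D m p * x p) + E m)
    -- the system is kinetic:
    (hA : ∀ m p, p ≠ m → 0 ≤ A m p)
    (hC : ∀ m p q, p < q → p ≠ m → q ≠ m → 0 ≤ C m p q)
    (hD : ∀ m p, p ≠ m → 0 ≤ D m p)
    (hE : ∀ m, 0 ≤ E m)
    (hapos : ∀ m, 0 < a m)
    -- V is a first integral:
    (hfi : ∀ x : Fin M → ℝ, ∑ m, a m * x m * F m x = 0) :
    ∃ K : Fin M → Fin M → ℝ, (∀ m p, 0 ≤ K m p) ∧
      ∀ m x, F m x =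
        (∑ p ∈ univ.filter (fun p => p ≠ m), a p * K m p * (x p) ^ 2) -
        (∑ p ∈ univ.filter (fun p => p ≠ m), a p * K p m * x m * x p) := by
  -- Single-point evaluation:
  have h1 : ∀ (m : Fin M) (t : ℝ),
      a m * t * (A m m * t^2 + D m m * t + E m) = 0 := by
    intro m t
    have := hfi (fun i => if i = m then t else 0)
    rw [Finset.sum_eq_single m] at this
    · rw [hF] at this
      simpa [Finset.sum_ite_eq', Finset.mul_sum, ite_pow,
        apply_ite (fun y : ℝ => y^2)] using this
    · intro n _ hn
      simp [hn]
    · simp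
  -- diagonal coefficients vanish:
  have key1 : ∀ m : Fin M, A m m = 0 ∧ D m m = 0 ∧ E m = 0 := by
    intro m
    have e1 := h1 m 1
    have e2 := h1 m (-1)
    have e3 := h1 m 2
    have ham := (hapos m).ne'
    ring_nf at e1 e2 e3
    refine ⟨?_, ?_, ?_⟩
    · have : a m * A m m = 0 := by linarith
      exact (mul_eq_zero.mp this).resolve_left ham
    · have : a m * D m m = 0 := by linarith
      exact (mul_eq_zero.mp this).resolve_left ham
    · have : a m * E m = 0 := by linarith
      exact (mul_eq_zero.mp this).resolve_left ham
  have hAmm : ∀ m : Fin M, A m m = 0 := fun m => (key1 m).1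
  have hDmm : ∀ m : Fin M, D m m = 0 := fun m => (key1 m).2.1
  have hE0 : ∀ m : Fin M, E m = 0 := fun m => (key1 m).2.2
  -- Two-point evaluation of F:
  have hFeval2 : ∀ (m p : Fin M), m ≠ p → ∀ s t : ℝ,
      F m (fun i => if i = m then s else if i = p then t else 0) =
        A m m * s^2 + A m p * t^2 + B m p * s * t + D m m * s + D m p * t + E m := by
    intro m p hmp s t
    rw [hF]
    have e1 : (∑ p', A m p' * ((if p' = m then s else if p' = p then t else 0)) ^ 2)
        = A m m * s^2 + A m p * t^2 := by
      rw [sum_two' m p hmp]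
      · simp [hmp, Ne.symm hmp]
      · intro i him hip; simp [him, hip]
    have e2 : (∑ p' ∈ univ.filter (fun p' => p' ≠ m),
        B m p' * (if m = m then s else if m = p then t else 0) *
          (if p' = m then s else if p' = p then t else 0)) = B m p * s * t := by
      rw [Finset.sum_filter, sum_two' m p hmp]
      · simp [hmp, Ne.symm hmp]
      · intro i him hip; simp [him, hip]
    have e3 : (∑ u, ∑ v ∈ univ.filter (fun v => u < v ∧ u ≠ m ∧ v ≠ m),
        C m u v * (if u = m then s else if u = p then t else 0) *
          (if v = m then s else if v = p then t else 0)) = 0 := by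
      apply Finset.sum_eq_zero
      intro u _
      apply Finset.sum_eq_zero
      intro v hv
      simp only [Finset.mem_filter] at hv
      obtain ⟨-, huv, hum, hvm⟩ := hv
      by_cases hup : u = p
      · subst hup
        have hvp : v ≠ u := (ne_of_gt huv)
        simp [hvm, hvp]
      · simp [hum, hup]
    have e4 : (∑ p', D m p' * (if p' = m then s else if p' = p then t else 0))
        = D m m * s + D m p * t := by
      rw [sum_two' m p hmp]
      · simp [hmp, Ne.symm hmp]
      · intro i him hip; simp [him, hip]
    rw [e1, e2, e3, e4]
    ring
  -- Two-point relation: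
  have h2 : ∀ (m p : Fin M), m ≠ p → ∀ s t : ℝ,
      a m * s * (A m m * s^2 + A m p * t^2 + B m p * s * t + D m m * s + D m p * t + E m)
      + a p * t * (A p p * t^2 + A p m * s^2 + B p m * t * s + D p p * t + D p m * s + E p)
      = 0 := by
    intro m p hmp s t
    have hx := hfi (fun i => if i = m then s else if i = p then t else 0)
    rw [sum_two' m p hmp _ (by intro n hnm hnp; simp [hnm, hnp])] at hx
    simp only at hx
    rw [hFeval2 m p hmp s t] at hx
    rw [show (fun i => if i = m then s else if i = p then t else 0)
        = (fun i => if i = p then t else if i = m then s else 0) from funext fun i => by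
          by_cases h1 : i = m
          · subst h1; simp [hmp]
          · by_cases h2 : i = p <;> simp [h1, h2, Ne.symm hmp]] at hx
    rw [hFeval2 p m (Ne.symm hmp) t s] at hx
    simp only [if_pos, if_neg hmp, if_neg (Ne.symm hmp), ite_true, if_true] at hx
    linear_combination hx
  -- Cleaned two-point relation:
  have h2' : ∀ (m p : Fin M), m ≠ p → ∀ s t : ℝ,
      (a m * A m p + a p * B p m) * s * t^2 + (a m * B m p + a p * A p m) * s^2 * t +
      (a m * D m p + a p * D p m) * s * t = 0 := by
    intro m p hmp s t
    have hx := h2 m p hmp s t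
    linear_combination hx - s^3 * a m * hAmm m - t^3 * a p * hAmm p
      - s^2 * a m * hDmm m - t^2 * a p * hDmm p - s * a m * hE0 m - t * a p * hE0 p
  have key2 : ∀ (m p : Fin M), m ≠ p →
      (a m * B m p + a p * A p m = 0) ∧ (a m * D m p + a p * D p m = 0) := by
    intro m p hmp
    have e1 := h2' m p hmp 1 1
    have e2 := h2' m p hmp 1 (-1)
    have e3 := h2' m p hmp 2 1
    ring_nf at e1 e2 e3
    constructor <;> linarith
  have hABrel : ∀ (m p : Fin M), m ≠ p → a m * B m p + a p * A p m = 0 :=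
    fun m p hmp => (key2 m p hmp).1
  have hDoff : ∀ (m p : Fin M), m ≠ p → D m p = 0 := by
    intro m p hmp
    have hw := (key2 m p hmp).2
    have h1' : 0 ≤ a m * D m p := mul_nonneg (hapos m).le (hD m p (Ne.symm hmp))
    have h2'' : 0 ≤ a p * D p m := mul_nonneg (hapos p).le (hD p m hmp)
    have : a m * D m p = 0 := by linarith
    exact (mul_eq_zero.mp this).resolve_left (hapos m).ne'
  have hD0 : ∀ (m p : Fin M), D m p = 0 := by
    intro m p
    by_cases h : p = m
    · subst h; exact hDmm p
    · exact hDoff m p (Ne.symm h)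
  -- Three-point evaluation of F:
  have hFeval3 : ∀ (m p q : Fin M), m ≠ p → m ≠ q → p ≠ q → p < q →
      F m (fun i => if i = m ∨ i = p ∨ i = q then (1:ℝ) else 0) =
        A m m + A m p + A m q + B m p + B m q + C m p q + D m m + D m p + D m q + E m := by
    intro m p q hmp hmq hpq hlt
    rw [hF]
    have e1 : (∑ p', A m p' * ((if p' = m ∨ p' = p ∨ p' = q then (1:ℝ) else 0)) ^ 2)
        = A m m + A m p + A m q := by
      rw [sum_three' m p q hmp hmq hpq]
      · simp
      · intro i h1 h2 h3; simp [h1, h2, h3]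
    have e2 : (∑ p' ∈ univ.filter (fun p' => p' ≠ m),
        B m p' * (if m = m ∨ m = p ∨ m = q then (1:ℝ) else 0) *
          (if p' = m ∨ p' = p ∨ p' = q then (1:ℝ) else 0)) = B m p + B m q := by
      rw [Finset.sum_filter, sum_three' m p q hmp hmq hpq]
      · simp [Ne.symm hmp, Ne.symm hmq]
      · intro i h1 h2 h3; simp [h1, h2, h3]
    have e3 : (∑ u, ∑ v ∈ univ.filter (fun v => u < v ∧ u ≠ m ∧ v ≠ m),
        C m u v * (if u = m ∨ u = p ∨ u = q then (1:ℝ) else 0) *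
          (if v = m ∨ v = p ∨ v = q then (1:ℝ) else 0)) = C m p q := by
      rw [sum_three' m p q hmp hmq hpq]
      · have f1 : (∑ v ∈ univ.filter (fun v => m < v ∧ m ≠ m ∧ v ≠ m),
            C m m v * (if m = m ∨ m = p ∨ m = q then (1:ℝ) else 0) *
              (if v = m ∨ v = p ∨ v = q then (1:ℝ) else 0)) = 0 := by
          apply Finset.sum_eq_zero
          intro v hv
          simp only [Finset.mem_filter] at hv
          exact absurd rfl hv.2.2.1
        have f2 : (∑ v ∈ univ.filter (fun v => p < v ∧ p ≠ m ∧ v ≠ m),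
            C m p v * (if p = m ∨ p = p ∨ p = q then (1:ℝ) else 0) *
              (if v = m ∨ v = p ∨ v = q then (1:ℝ) else 0)) = C m p q := by
          rw [Finset.sum_filter, sum_three' m p q hmp hmq hpq]
          · simp [Ne.symm hmp, Ne.symm hmq, hlt, lt_irrefl, Ne.symm hpq, hpq]
          · intro i h1 h2 h3; simp [h1, h2, h3]
        have f3 : (∑ v ∈ univ.filter (fun v => q < v ∧ q ≠ m ∧ v ≠ m),
            C m q v * (if q = m ∨ q = p ∨ q = q then (1:ℝ) else 0) *
              (if v = m ∨ v = p ∨ v = q then (1:ℝ) else 0)) = 0 := by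
          apply Finset.sum_eq_zero
          intro v hv
          simp only [Finset.mem_filter] at hv
          obtain ⟨-, hqv, -, hvm⟩ := hv
          have h1 : v ≠ p := fun h => absurd (h ▸ hqv) (by simp [not_lt, hlt.le])
          have h2 : v ≠ q := (ne_of_gt hqv)
          simp [hvm, h1, h2]
        rw [f1, f2, f3]; ring
      · intro u h1 h2 h3
        apply Finset.sum_eq_zero
        intro v _
        simp [h1, h2, h3]
    have e4 : (∑ p', D m p' * (if p' = m ∨ p' = p ∨ p' = q then (1:ℝ) else 0))
        = D m m + D m p + D m q := by
      rw [sum_three' m p q hmp hmq hpq]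
      · simp
      · intro i h1 h2 h3; simp [h1, h2, h3]
    rw [e1, e2, e3, e4]
    ring
  -- Triple relation:
  have h3 : ∀ (m p q : Fin M), m < p → p < q →
      a m * C m p q + a p * C p m q + a q * C q m p = 0 := by
    intro m p q hmp' hpq'
    have hmp : m ≠ p := ne_of_lt hmp'
    have hpq : p ≠ q := ne_of_lt hpq'
    have hmq : m ≠ q := ne_of_lt (hmp'.trans hpq')
    have hx := hfi (fun i => if i = m ∨ i = p ∨ i = q then (1:ℝ) else 0)
    rw [sum_three' m p q hmp hmq hpq _
      (by intro n h1 h2 h3; simp [h1, h2, h3])] at hx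
    simp only at hx
    rw [hFeval3 m p q hmp hmq hpq hpq'] at hx
    rw [show (fun i => if i = m ∨ i = p ∨ i = q then (1:ℝ) else 0)
        = (fun i => if i = p ∨ i = m ∨ i = q then (1:ℝ) else 0) from
        funext fun i => if_congr (by tauto) rfl rfl] at hx
    rw [hFeval3 p m q (Ne.symm hmp) hpq hmq (hmp'.trans hpq')] at hx
    rw [show (fun i => if i = p ∨ i = m ∨ i = q then (1:ℝ) else 0)
        = (fun i => if i = q ∨ i = m ∨ i = p then (1:ℝ) else 0) from
        funext fun i => if_congr (by tauto) rfl rfl] at hx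
    rw [hFeval3 q m p (Ne.symm hmq) (Ne.symm hpq) hmp hmp'] at hx
    simp only [eq_self_iff_true, true_or, or_true, if_true, if_pos] at hx
    linear_combination hx - hABrel m p hmp - hABrel m q hmq - hABrel p m (Ne.symm hmp)
      - hABrel p q hpq - hABrel q m (Ne.symm hmq) - hABrel q p (Ne.symm hpq)
      - a m * hAmm m - a p * hAmm p - a q * hAmm q
      - a m * hD0 m m - a m * hD0 m p - a m * hD0 m q
      - a p * hD0 p p - a p * hD0 p m - a p * hD0 p q
      - a q * hD0 q q - a q * hD0 q m - a q * hD0 q p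
      - a m * hE0 m - a p * hE0 p - a q * hE0 q
  -- all C coefficients vanish:
  have hC0 : ∀ (m p q : Fin M), p < q → p ≠ m → q ≠ m → C m p q = 0 := by
    intro m p q hpq hpm hqm
    rcases lt_trichotomy m p with hmp | rfl | hpm'
    · -- m < p < q : C m p q is the first term of h3 m p q
      have hsum := h3 m p q hmp hpq
      have c1 : 0 ≤ a m * C m p q := mul_nonneg (hapos m).le (hC m p q hpq hpm hqm)
      have c2 : 0 ≤ a p * C p m q :=
        mul_nonneg (hapos p).le (hC p m q (hmp.trans hpq) (ne_of_lt hmp) (ne_of_gt hpq))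
      have c3 : 0 ≤ a q * C q m p :=
        mul_nonneg (hapos q).le (hC q m p hmp (ne_of_lt (hmp.trans hpq)) (ne_of_lt hpq))
      have : a m * C m p q = 0 := by linarith
      exact (mul_eq_zero.mp this).resolve_left (hapos m).ne'
    · exact absurd rfl hpm
    · rcases lt_trichotomy m q with hmq | rfl | hqm'
      · -- p < m < q : C m p q is middle term of h3 p m q
        have hsum := h3 p m q hpm' hmq
        have c1 : 0 ≤ a p * C p m q :=
          mul_nonneg (hapos p).le (hC p m q hmq (ne_of_gt hpm') (Ne.symm (ne_of_lt hpq)))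
        have c2 : 0 ≤ a m * C m p q := mul_nonneg (hapos m).le (hC m p q hpq hpm hqm)
        have c3 : 0 ≤ a q * C q p m :=
          mul_nonneg (hapos q).le (hC q p m hpm' (ne_of_lt hpq) (ne_of_lt hmq))
        have : a m * C m p q = 0 := by linarith
        exact (mul_eq_zero.mp this).resolve_left (hapos m).ne'
      · exact absurd rfl hqm
      · -- p < q < m : C m p q is last term of h3 p q m
        have hsum := h3 p q m hpq hqm'
        have c1 : 0 ≤ a p * C p q m :=
          mul_nonneg (hapos p).le (hC p q m hqm' (ne_of_gt hpq) (ne_of_gt (hpq.trans hqm')))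
        have c2 : 0 ≤ a q * C q p m :=
          mul_nonneg (hapos q).le (hC q p m (hpq.trans hqm') (ne_of_lt hpq) (ne_of_gt hqm'))
        have c3 : 0 ≤ a m * C m p q := mul_nonneg (hapos m).le (hC m p q hpq hpm hqm)
        have : a m * C m p q = 0 := by linarith
        exact (mul_eq_zero.mp this).resolve_left (hapos m).ne'
  -- Final assembly:
  refine ⟨fun m p => A m p / a p, ?_, ?_⟩
  · intro m p
    by_cases h : p = m
    · simp [h, hAmm]
    · exact div_nonneg (hA m p h) (hapos p).le

  · intro m x
    rw [hF]
    have eC : (∑ u, ∑ v ∈ univ.filter (fun v => u < v ∧ u ≠ m ∧ v ≠ m),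
        C m u v * x u * x v) = 0 := by
      apply Finset.sum_eq_zero
      intro u _
      apply Finset.sum_eq_zero
      intro v hv
      simp only [Finset.mem_filter] at hv
      rw [hC0 m u v hv.2.1 hv.2.2.1 hv.2.2.2]
      ring
    have eD : (∑ p, D m p * x p) = 0 := by
      apply Finset.sum_eq_zero
      intro p _
      rw [hD0 m p]
      ring
    have eA1 : (∑ p ∈ univ.filter (fun p => p ≠ m), A m p * (x p) ^ 2)
        = ∑ p, A m p * (x p) ^ 2 := by
      apply Finset.sum_filter_of_ne
      intro p _ hne him
      apply hne
      rw [him, hAmm m]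
      ring
    have eA : (∑ p, A m p * (x p) ^ 2)
        = ∑ p ∈ univ.filter (fun p => p ≠ m), a p * (A m p / a p) * (x p) ^ 2 := by
      rw [← eA1]
      apply Finset.sum_congr rfl
      intro p hp
      have hc : a p * (A m p / a p) = A m p := by
        rw [mul_comm, div_mul_cancel₀ _ (hapos p).ne']
      rw [hc]
    have eB : (∑ p ∈ univ.filter (fun p => p ≠ m), B m p * x m * x p)
        = - ∑ p ∈ univ.filter (fun p => p ≠ m), a p * (A p m / a m) * x m * x p := by
      rw [← Finset.sum_neg_distrib]
      apply Finset.sum_congr rfl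
      intro p hp
      simp only [Finset.mem_filter] at hp
      have hpm : p ≠ m := hp.2
      have hrel := hABrel m p (Ne.symm hpm)
      have ham : a m ≠ 0 := (hapos m).ne'
      have hB : B m p = -(a p * (A p m / a m)) := by
        field_simp [ham]
        linear_combination hrel
      rw [hB]
      ring
    rw [eC, eD, eA, eB, hE0]
    ring
end

section
/- Conversely, for any nonnegative numbers K_{m,p} (m ≠ p) and positive numbers a_m, the system x_m' = Σ_{p≠m} a_p K_{m,p} x_p^2 − Σ_{p≠m} a_p K_{p,m} x_m x_p is kinetic and has V(x) = Σ_m a_m x_m^2 as a first integral. -/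
open Finset in
/-- Conversely: for nonnegative `K_{m,p}` (m ≠ p) and positive `a_m`, the system
`x_m' = Σ_{p≠m} a_p K_{m,p} x_p² − Σ_{p≠m} a_p K_{p,m} x_m x_p` is kinetic
(has no negative cross-effect) and has `V(x) = Σ a_m x_m²` as a first integral. -/
theorem stmt_3 (M : ℕ) (K : Fin M → Fin M → ℝ) (a : Fin M → ℝ)
    (hK : ∀ m p, m ≠ p → 0 ≤ K m p) (ha : ∀ m, 0 < a m)
    (F : Fin M → (Fin M → ℝ) → ℝ)
    (hF : ∀ m x, F m x =
      (∑ p ∈ univ.filter (fun p => p ≠ m), a p * K m p * (x p) ^ 2) -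
      (∑ p ∈ univ.filter (fun p => p ≠ m), a p * K p m * x m * x p)) :
    -- the system is kinetic (no negative cross-effect):
    (∀ m, ∀ x : Fin M → ℝ, (∀ p, 0 ≤ x p) → x m = 0 → 0 ≤ F m x) ∧
    -- V is a first integral:
    (∀ x : Fin M → ℝ, ∑ m, 2 * a m * x m * F m x = 0) := by
  constructor
  · intro m x hx hxm
    rw [hF, hxm]
    simp only [mul_zero, zero_mul, Finset.sum_const_zero, sub_zero]
    apply Finset.sum_nonneg
    intro p hp
    have hpm : p ≠ m := (Finset.mem_filter.mp hp).2
    have := hK m p hpm.symm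
    have := (ha p).le
    positivity
  · intro x
    have hrw : ∀ m, 2 * a m * x m * F m x =
        (∑ p, if p ≠ m then 2 * a m * a p * K m p * x m * (x p)^2 else 0) -
        (∑ p, if p ≠ m then 2 * a m * a p * K p m * (x m)^2 * x p else 0) := by
      intro m
      rw [hF, mul_sub, Finset.mul_sum, Finset.mul_sum]
      simp only [Finset.sum_filter]
      congr 1 <;> (apply Finset.sum_congr rfl; intro p _; split <;> ring)
    simp only [hrw]
    rw [Finset.sum_sub_distrib, sub_eq_zero, Finset.sum_comm]
    apply Finset.sum_congr rfl; intro m _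
    apply Finset.sum_congr rfl; intro p _
    rcases eq_or_ne p m with h | h
    · simp [h]
    · simp only [h, h.symm, ne_eq, not_false_iff, if_true]
      ring
end

section
/- Let x_m' = F_m(x) be a quadratic polynomial system on ℝ^M that is kinetic and kinetically mass conserving, i.e., there exist positive numbers ϱ_1,…,ϱ_M with Σ_m ϱ_m F_m(x) = 0 identically. If V(x) = Σ_m a_m x_m^2 with all a_m ≠ 0 is a first integral, then F_m = 0 for all m. -/
open Finset in
/-- A kinetic, kinetically mass conserving quadratic system admitting the
diagonal quadratic first integral `V(x) = Σ a_m x_m²` (all `a_m ≠ 0`)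
must be identically zero. -/
theorem stmt_4 (M : ℕ)
    (A B D : Fin M → Fin M → ℝ) (C : Fin M → Fin M → Fin M → ℝ)
    (E : Fin M → ℝ) (a : Fin M → ℝ) (ϱ : Fin M → ℝ)
    (F : Fin M → (Fin M → ℝ) → ℝ)
    (hF : ∀ m x, F m x =
      (∑ p, A m p * (x p) ^ 2) +
      (∑ p ∈ univ.filter (fun p => p ≠ m), B m p * x m * x p) +
      (∑ p, ∑ q ∈ univ.filter (fun q => p < q ∧ p ≠ m ∧ q ≠ m),
        C m p q * x p * x q) +
      (∑ p, D m p * x p) + E m)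
    -- the system is kinetic:
    (hA : ∀ m p, p ≠ m → 0 ≤ A m p)
    (hC : ∀ m p q, p < q → p ≠ m → q ≠ m → 0 ≤ C m p q)
    (hD : ∀ m p, p ≠ m → 0 ≤ D m p)
    (hE : ∀ m, 0 ≤ E m)
    -- the system is kinetically mass conserving:
    (hϱ : ∀ m, 0 < ϱ m)
    (hmc : ∀ x : Fin M → ℝ, ∑ m, ϱ m * F m x = 0)
    (ha : ∀ m, a m ≠ 0)
    -- V is a first integral:
    (hfi : ∀ x : Fin M → ℝ, ∑ m, a m * x m * F m x = 0) :
    ∀ m x, F m x = 0 := by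
  classical
  -- one-point evaluation
  have evalF1 : ∀ (m p : Fin M) (t : ℝ),
      F m (fun r => if r = p then t else 0) = A m p * t^2 + D m p * t + E m := by
    intro m p t
    rw [hF]
    have h1 : ∑ q, A m q * ((if q = p then t else 0 : ℝ))^2 = A m p * t^2 := by
      rw [Finset.sum_eq_single p]
      · simp
      · intro q _ hq; simp [hq]
      · simp
    have h2 : ∑ q ∈ univ.filter (fun q => q ≠ m),
        B m q * (if m = p then t else 0) * (if q = p then t else 0) = 0 := by
      apply Finset.sum_eq_zero
      intro q hq
      simp only [mem_filter] at hq
      rcases eq_or_ne m p with h | h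
      · have : q ≠ p := h ▸ hq.2
        simp [this]
      · simp [h]
    have h3 : ∑ p', ∑ q' ∈ univ.filter (fun q' => p' < q' ∧ p' ≠ m ∧ q' ≠ m),
        C m p' q' * (if p' = p then t else 0) * (if q' = p then t else 0) = 0 := by
      apply Finset.sum_eq_zero
      intro p' _
      apply Finset.sum_eq_zero
      intro q' hq'
      simp only [mem_filter] at hq'
      rcases eq_or_ne p' p with h | h
      · have : q' ≠ p := by rintro rfl; exact absurd h (ne_of_gt hq'.2.1).symm
        simp [this]
      · simp [h]
    have h4 : ∑ q, D m q * (if q = p then t else 0 : ℝ) = D m p * t := by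
      rw [Finset.sum_eq_single p]
      · simp
      · intro q _ hq; simp [hq]
      · simp
    simp only [h1, h2, h3, h4]
    ring
  -- the first integral at one-point vectors
  have key1 : ∀ (p : Fin M) (t : ℝ), t ≠ 0 →
      A p p * t^2 + D p p * t + E p = 0 := by
    intro p t ht
    have h := hfi (fun r => if r = p then t else 0)
    rw [Finset.sum_eq_single p] at h
    · simp only [if_pos rfl] at h
      rw [evalF1] at h
      rcases mul_eq_zero.mp h with h' | h'
      · rcases mul_eq_zero.mp h' with h'' | h''
        · exact absurd h'' (ha p)
        · exact absurd h'' ht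
      · exact h'
    · intro q _ hq; simp [hq]
    · simp
  have hApp : ∀ p, A p p = 0 := by
    intro p
    have e1 := key1 p 1 one_ne_zero
    have e2 := key1 p (-1) (by norm_num)
    have e3 := key1 p 2 two_ne_zero
    nlinarith [e1, e2, e3]
  have hDpp : ∀ p, D p p = 0 := by
    intro p
    have e1 := key1 p 1 one_ne_zero
    have e2 := key1 p (-1) (by norm_num)
    nlinarith [e1, e2]
  have hE0 : ∀ p, E p = 0 := by
    intro p
    have e1 := key1 p 1 one_ne_zero
    have e2 := key1 p (-1) (by norm_num)
    have e3 := key1 p 2 two_ne_zero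
    nlinarith [e1, e2, e3]
  -- mass conservation at one-point vectors
  have key2 : ∀ (p : Fin M) (t : ℝ),
      (∑ m, ϱ m * A m p) * t^2 + (∑ m, ϱ m * D m p) * t = 0 := by
    intro p t
    have h := hmc (fun r => if r = p then t else 0)
    calc (∑ m, ϱ m * A m p) * t^2 + (∑ m, ϱ m * D m p) * t
        = ∑ m, ϱ m * F m (fun r => if r = p then t else 0) := by
          rw [Finset.sum_mul, Finset.sum_mul, ← Finset.sum_add_distrib]
          apply Finset.sum_congr rfl
          intro m _
          rw [evalF1, hE0]
          ring
      _ = 0 := h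
  have hSA : ∀ p, ∑ m, ϱ m * A m p = 0 := by
    intro p
    have e1 := key2 p 1
    have e2 := key2 p (-1)
    nlinarith [e1, e2]
  have hSD : ∀ p, ∑ m, ϱ m * D m p = 0 := by
    intro p
    have e1 := key2 p 1
    have e2 := key2 p (-1)
    nlinarith [e1, e2]
  have hAnn : ∀ m p, 0 ≤ A m p := by
    intro m p
    rcases eq_or_ne p m with rfl | h
    · exact le_of_eq (hApp p).symm
    · exact hA m p h
  have hDnn : ∀ m p, 0 ≤ D m p := by
    intro m p
    rcases eq_or_ne p m with rfl | h
    · exact le_of_eq (hDpp p).symm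
    · exact hD m p h
  have hA0 : ∀ m p, A m p = 0 := by
    intro m p
    have h := (Finset.sum_eq_zero_iff_of_nonneg (fun i _ =>
      mul_nonneg (hϱ i).le (hAnn i p))).mp (hSA p) m (mem_univ m)
    rcases mul_eq_zero.mp h with h' | h'
    · exact absurd h' (hϱ m).ne'
    · exact h'
  have hD0 : ∀ m p, D m p = 0 := by
    intro m p
    have h := (Finset.sum_eq_zero_iff_of_nonneg (fun i _ =>
      mul_nonneg (hϱ i).le (hDnn i p))).mp (hSD p) m (mem_univ m)
    rcases mul_eq_zero.mp h with h' | h'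
    · exact absurd h' (hϱ m).ne'
    · exact h'
  -- two-point evaluation: F m at x supported on {m, p}
  have evalF2m : ∀ (m p : Fin M), m ≠ p → ∀ (t s : ℝ),
      F m (fun r => if r = m then t else if r = p then s else 0)
        = B m p * t * s := by
    intro m p hmp t s
    rw [hF]
    simp only [hA0, hD0, hE0, zero_mul, Finset.sum_const_zero, add_zero, zero_add]
    have h3 : ∑ p', ∑ q' ∈ univ.filter (fun q' => p' < q' ∧ p' ≠ m ∧ q' ≠ m),
        C m p' q' * (if p' = m then t else if p' = p then s else 0)
          * (if q' = m then t else if q' = p then s else 0) = 0 := by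
      apply Finset.sum_eq_zero
      intro p' _
      apply Finset.sum_eq_zero
      intro q' hq'
      simp only [mem_filter] at hq'
      obtain ⟨-, hlt, hp'm, hq'm⟩ := hq'
      rcases eq_or_ne p' p with h | h
      · have : q' ≠ p := by rintro rfl; exact absurd h (ne_of_gt hlt).symm
        simp [this, hq'm]
      · simp [h, hp'm]
    rw [h3, add_zero]
    rw [Finset.sum_eq_single p]
    · simp [hmp, (Ne.symm hmp)]
    · intro q hq hqp
      simp only [mem_filter] at hq
      simp [hq.2, hqp]
    · intro h
      exact absurd (by simpa using Ne.symm hmp) (by simpa using h)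
  -- first integral at two-point vectors kills B
  have hB0 : ∀ m p, p ≠ m → B m p = 0 := by
    intro m p hpm
    have hmp : m ≠ p := Ne.symm hpm
    have key : ∀ t s : ℝ,
        a m * B m p * (t^2 * s) + a p * B p m * (t * s^2) = 0 := by
      intro t s
      set x : Fin M → ℝ := fun r => if r = m then t else if r = p then s else 0 with hx
      have hxm : x m = t := by simp [hx]
      have hxp : x p = s := by simp [hx, hpm]
      have hFmx : F m x = B m p * t * s := evalF2m m p hmp t s
      have hFpx : F p x = B p m * s * t := by
        have h' := evalF2m p m hpm s t
        have hxx : (fun r => if r = p then s else if r = m then t else 0) = x := by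
          funext r
          simp only [hx]
          rcases eq_or_ne r m with rfl | h1
          · simp [hmp]
          · simp [h1]
        rw [hxx] at h'
        exact h'
      have h := hfi x
      rw [← Finset.sum_subset (Finset.subset_univ {m, p})] at h
      · rw [Finset.sum_pair hmp, hxm, hxp, hFmx, hFpx] at h
        calc a m * B m p * (t^2 * s) + a p * B p m * (t * s^2)
            = a m * t * (B m p * t * s) + a p * s * (B p m * s * t) := by ring
          _ = 0 := h
      · intro q _ hq
        simp only [mem_insert, mem_singleton, not_or] at hq
        simp [hx, hq.1, hq.2]
    have e1 := key 1 1
    have e2 := key 2 1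
    have : a m * B m p = 0 := by nlinarith [e1, e2]
    rcases mul_eq_zero.mp this with h' | h'
    · exact absurd h' (ha m)
    · exact h'
  -- mass conservation at two-point vectors kills C
  have hC0 : ∀ u v q, u < v → q ≠ u → q ≠ v → C q u v = 0 := by
    intro u v q huv hqu hqv
    have huv' : u ≠ v := ne_of_lt huv
    set w : Fin M → ℝ := fun r => if r = u then 1 else if r = v then 1 else 0 with hw
    have hFw : ∀ r, F r w = if r = u ∨ r = v then 0 else C r u v := by
      intro r
      rcases eq_or_ne r u with rfl | hru
      · rw [evalF2m r v huv', hB0 r v (Ne.symm huv')]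
        simp
      rcases eq_or_ne r v with rfl | hrv
      · have h := evalF2m r u (Ne.symm huv') 1 1
        have hwx : (fun x => if x = r then (1:ℝ) else if x = u then 1 else 0) = w := by
          funext x
          simp only [hw]
          rcases eq_or_ne x u with rfl | hxu
          · simp [Ne.symm huv']
          · simp [hxu]
        rw [hwx] at h
        rw [h, hB0 r u huv']
        simp
      · rw [if_neg (by simp [hru, hrv])]
        rw [hF]
        simp only [hA0, hD0, hE0, zero_mul, Finset.sum_const_zero, add_zero, zero_add]
        have hBz : ∑ p' ∈ univ.filter (fun p' => p' ≠ r), B r p' * w r * w p' = 0 := by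
          apply Finset.sum_eq_zero
          intro q' hq'
          simp only [mem_filter] at hq'
          rw [hB0 r q' hq'.2]
          ring
        rw [hBz, zero_add]
        rw [Finset.sum_eq_single u]
        · rw [Finset.sum_eq_single v]
          · simp [hw, huv', Ne.symm huv']
          · intro q' hq' hq'v
            simp only [mem_filter] at hq'
            obtain ⟨-, hlt, -, -⟩ := hq'
            have h1 : q' ≠ u := ne_of_gt hlt
            simp [hw, h1, hq'v]
          · intro hv
            exfalso
            apply hv
            simp only [mem_filter, mem_univ, true_and]
            exact ⟨huv, Ne.symm hru, Ne.symm hrv⟩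
        · intro p' _ hp'u
          apply Finset.sum_eq_zero
          intro q' hq'
          simp only [mem_filter] at hq'
          obtain ⟨-, hlt, -, -⟩ := hq'
          rcases eq_or_ne q' u with rfl | hq'u
          · have h1 : p' ≠ v := by rintro rfl; exact absurd huv (asymm hlt)
            simp [hw, hp'u, h1]
          · rcases eq_or_ne q' v with rfl | hq'v
            · have h1 : p' ≠ q' := ne_of_lt hlt
              simp [hw, hp'u, h1]
            · simp [hw, hq'u, hq'v]
        · simp
    have h := hmc w
    have hterm : ∀ r, (0:ℝ) ≤ ϱ r * F r w := by
      intro r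
      rw [hFw]
      rcases eq_or_ne r u with rfl | hru
      · simp
      rcases eq_or_ne r v with rfl | hrv
      · simp
      · rw [if_neg (by simp [hru, hrv])]
        exact mul_nonneg (hϱ r).le (hC r u v huv (Ne.symm hru) (Ne.symm hrv))
    have hz := (Finset.sum_eq_zero_iff_of_nonneg (fun i _ => hterm i)).mp h q (mem_univ q)
    rw [hFw, if_neg (by simp [hqu, hqv])] at hz
    rcases mul_eq_zero.mp hz with h' | h'
    · exact absurd h' (hϱ q).ne'
    · exact h'
  -- conclusion
  intro m x
  rw [hF]
  have h1 : ∑ p, A m p * (x p)^2 = 0 := by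
    apply Finset.sum_eq_zero; intro p _; rw [hA0]; ring
  have h2 : ∑ p ∈ univ.filter (fun p => p ≠ m), B m p * x m * x p = 0 := by
    apply Finset.sum_eq_zero; intro p hp
    simp only [mem_filter] at hp
    rw [hB0 m p hp.2]; ring
  have h3 : ∑ p, ∑ q ∈ univ.filter (fun q => p < q ∧ p ≠ m ∧ q ≠ m),
      C m p q * x p * x q = 0 := by
    apply Finset.sum_eq_zero; intro p _
    apply Finset.sum_eq_zero; intro q hq
    simp only [mem_filter] at hq
    obtain ⟨-, hlt, hpm, hqm⟩ := hq
    rw [hC0 p q m hlt (Ne.symm hpm) (Ne.symm hqm)]; ring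
  have h4 : ∑ p, D m p * x p = 0 := by
    apply Finset.sum_eq_zero; intro p _; rw [hD0]; ring
  rw [h1, h2, h3, h4, hE0]
  ring
end

section
/- Consider the quadratic system x' = A_1 x^2 + B_1 x y + C_1 y^2 + D_1 x + E_1 y + F_1, y' = A_2 x^2 + B_2 x y + C_2 y^2 + D_2 x + E_2 y + F_2, which is kinetic (C_1, E_1, F_1, A_2, D_2, F_2 ≥ 0). If V(x,y) = a x^2 + 2b x y + c y^2 with a > 0, c > 0, ac − b^2 ≠ 0 is a first integral, then there exist K, L ≥ 0 such that x' = −bK x^2 + (−cK + bL) x y + cL y^2 and y' = aK x^2 + (bK − aL) x y − bL y^2. -/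
/-- Theorem on `V = a x² + 2b xy + c y²` with `a, c > 0`, `ac − b² ≠ 0` as a
first integral of a kinetic planar quadratic system. -/
theorem stmt_5 (A₁ B₁ C₁ D₁ E₁ F₁ A₂ B₂ C₂ D₂ E₂ F₂ a b c : ℝ)
    -- kinetic:
    (hC₁ : 0 ≤ C₁) (hE₁ : 0 ≤ E₁) (hF₁ : 0 ≤ F₁)
    (hA₂ : 0 ≤ A₂) (hD₂ : 0 ≤ D₂) (hF₂ : 0 ≤ F₂)
    (ha : 0 < a) (hc : 0 < c) (hdisc : a * c - b ^ 2 ≠ 0)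
    -- V is a first integral:
    (hfi : ∀ x y : ℝ,
      (2 * a * x + 2 * b * y) *
        (A₁ * x ^ 2 + B₁ * x * y + C₁ * y ^ 2 + D₁ * x + E₁ * y + F₁) +
      (2 * b * x + 2 * c * y) *
        (A₂ * x ^ 2 + B₂ * x * y + C₂ * y ^ 2 + D₂ * x + E₂ * y + F₂) = 0) :
    ∃ K L : ℝ, 0 ≤ K ∧ 0 ≤ L ∧
      (∀ x y : ℝ,
        A₁ * x ^ 2 + B₁ * x * y + C₁ * y ^ 2 + D₁ * x + E₁ * y + F₁ =
          -b * K * x ^ 2 + (-(c * K) + b * L) * x * y + c * L * y ^ 2) ∧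
      (∀ x y : ℝ,
        A₂ * x ^ 2 + B₂ * x * y + C₂ * y ^ 2 + D₂ * x + E₂ * y + F₂ =
          a * K * x ^ 2 + (b * K - a * L) * x * y - b * L * y ^ 2) := by
  have h30 : a * A₁ + b * A₂ = 0 := by
    linear_combination (1/4) * hfi 1 0 + (-1/4) * hfi 2 0 + (1/12) * hfi 3 0
  have h21 : a * B₁ + b * A₁ + b * B₂ + c * A₂ = 0 := by
    linear_combination (1/2) * hfi 1 0 + (-1/4) * hfi 2 0 + (1/4) * hfi 0 1 +
      (-1/2) * hfi 1 1 + (1/4) * hfi 2 1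
  have h12 : a * C₁ + b * B₁ + b * C₂ + c * B₂ = 0 := by
    linear_combination (-1/2) * hfi 1 0 + (5/4) * hfi 0 1 + (-1) * hfi 0 2 +
      (1/4) * hfi 0 3 + (1/4) * hfi 1 1 + (1/4) * hfi 1 (-1)
  have h03 : b * C₁ + c * C₂ = 0 := by
    linear_combination (1/4) * hfi 0 1 + (-1/4) * hfi 0 2 + (1/12) * hfi 0 3
  have h20 : a * D₁ + b * D₂ = 0 := by
    linear_combination (-5/4) * hfi 1 0 + (1) * hfi 2 0 + (-1/4) * hfi 3 0
  have h11 : a * E₁ + b * D₁ + b * E₂ + c * D₂ = 0 := by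
    linear_combination (-1/2) * hfi 1 0 + (1/4) * hfi 2 0 + (-2) * hfi 0 1 +
      (1) * hfi 0 2 + (-1/4) * hfi 0 3 + (3/4) * hfi 1 1 + (-1/4) * hfi 1 (-1) +
      (-1/4) * hfi 2 1
  have h02 : b * E₁ + c * E₂ = 0 := by
    linear_combination (-5/4) * hfi 0 1 + (1) * hfi 0 2 + (-1/4) * hfi 0 3
  have h10 : a * F₁ + b * F₂ = 0 := by
    linear_combination (3/2) * hfi 1 0 + (-3/4) * hfi 2 0 + (1/6) * hfi 3 0
  have h01 : b * F₁ + c * F₂ = 0 := by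
    linear_combination (3/2) * hfi 0 1 + (-3/4) * hfi 0 2 + (1/6) * hfi 0 3
  have ha' := ha.ne'
  have hc' := hc.ne'
  -- constant terms vanish
  have hF1 : F₁ = 0 := by
    have : (a * c - b ^ 2) * F₁ = 0 := by linear_combination c * h10 - b * h01
    exact (mul_eq_zero.1 this).resolve_left hdisc
  have hF2 : F₂ = 0 := by
    have : (a * c - b ^ 2) * F₂ = 0 := by linear_combination a * h01 - b * h10
    exact (mul_eq_zero.1 this).resolve_left hdisc
  -- linear terms vanish
  have hED : a * E₁ + c * D₂ = 0 := by
    have : (a * c - b ^ 2) * (a * E₁ + c * D₂) = 0 := by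
      linear_combination (a * c) * h11 - (a * b) * h02 - (b * c) * h20
    exact (mul_eq_zero.1 this).resolve_left hdisc
  have hE1 : E₁ = 0 := by
    nlinarith [mul_nonneg ha.le hE₁, mul_nonneg hc.le hD₂]
  have hD2 : D₂ = 0 := by
    nlinarith [mul_nonneg ha.le hE₁, mul_nonneg hc.le hD₂]
  have hD1 : D₁ = 0 := by
    have h : a * D₁ = 0 := by linear_combination h20 - b * hD2
    exact (mul_eq_zero.1 h).resolve_left ha'
  have hE2 : E₂ = 0 := by
    have h : c * E₂ = 0 := by linear_combination h02 - b * hE1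
    exact (mul_eq_zero.1 h).resolve_left hc'
  -- quadratic terms
  set K : ℝ := A₂ / a with hKdef
  set L : ℝ := C₁ / c with hLdef
  have hK : a * K = A₂ := by rw [hKdef]; field_simp
  have hL : c * L = C₁ := by rw [hLdef]; field_simp
  have hA1 : A₁ = -b * K := by
    have h : a * A₁ = a * (-b * K) := by linear_combination h30 + b * hK
    exact mul_left_cancel₀ ha' h
  have hC2v : C₂ = -b * L := by
    have h : c * C₂ = c * (-b * L) := by linear_combination h03 + b * hL
    exact mul_left_cancel₀ hc' h
  have hB1 : B₁ = -(c * K) + b * L := by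
    have h : (a * c - b ^ 2) * (B₁ - (-(c * K) + b * L)) = 0 := by
      linear_combination c * h21 - b * h12 - b * c * hA1 + c ^ 2 * hK -
        a * b * hL + b ^ 2 * hC2v
    have := (mul_eq_zero.1 h).resolve_left hdisc
    linarith
  have hB2 : B₂ = b * K - a * L := by
    have h : (a * c - b ^ 2) * (B₂ - (b * K - a * L)) = 0 := by
      linear_combination a * h12 - b * h21 + a ^ 2 * hL - a * b * hC2v +
        b ^ 2 * hA1 - b * c * hK
    have := (mul_eq_zero.1 h).resolve_left hdisc
    linarith
  refine ⟨K, L, div_nonneg hA₂ ha.le, div_nonneg hC₁ hc.le, ?_, ?_⟩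
  · intro x y
    linear_combination x ^ 2 * hA1 + x * y * hB1 - y ^ 2 * hL + x * hD1 +
      y * hE1 + hF1
  · intro x y
    linear_combination -(x ^ 2) * hK + x * y * hB2 + y ^ 2 * hC2v + x * hD2 +
      y * hE2 + hF2
end

section
/- Suppose the kinetic quadratic planar system x' = −bK x^2 + (−cK + bL) xy + cL y^2, y' = aK x^2 + (bK − aL)xy − bL y^2, with a, c > 0, ac − b^2 ≠ 0, K, L ≥ 0, is kinetically mass conserving: there exist ϱ_1, ϱ_2 > 0 with ϱ_1 x' + ϱ_2 y' = 0 identically. Then K = L = 0, i.e., x' = y' = 0. -/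
/-- If the kinetic quadratic system of Theorem `eq2D-1` is kinetically mass
conserving, then `K = L = 0`, i.e. `x' = y' = 0`. -/
theorem stmt_6 (a b c K L ϱ₁ ϱ₂ : ℝ)
    (ha : 0 < a) (hc : 0 < c) (hdisc : a * c - b ^ 2 ≠ 0)
    (hK : 0 ≤ K) (hL : 0 ≤ L) (hϱ₁ : 0 < ϱ₁) (hϱ₂ : 0 < ϱ₂)
    (hmc : ∀ x y : ℝ,
      ϱ₁ * (-b * K * x ^ 2 + (-(c * K) + b * L) * x * y + c * L * y ^ 2) +
      ϱ₂ * (a * K * x ^ 2 + (b * K - a * L) * x * y - b * L * y ^ 2) = 0) :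
    K = 0 ∧ L = 0 := by
  have h1 := hmc 1 0
  have h2 := hmc 0 1
  have h3 := hmc 1 1
  have e1 : K * (a * ϱ₂ - b * ϱ₁) = 0 := by nlinarith [h1]
  have e2 : L * (c * ϱ₁ - b * ϱ₂) = 0 := by nlinarith [h2]
  have e3 : ϱ₁ * (-(c * K) + b * L) + ϱ₂ * (b * K - a * L) = 0 := by nlinarith [h1, h2, h3]
  rcases mul_eq_zero.mp e1 with hK0 | hKc
  · rcases mul_eq_zero.mp e2 with hL0 | hLc
    · exact ⟨hK0, hL0⟩
    · -- K = 0, c ϱ₁ = b ϱ₂; show L = 0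
      refine ⟨hK0, ?_⟩
      by_contra hL0
      have e4 : b * ϱ₁ - a * ϱ₂ = 0 := by
        have : L * (b * ϱ₁ - a * ϱ₂) = 0 := by
          have := e3; subst hK0; nlinarith [this]
        rcases mul_eq_zero.mp this with h | h
        · exact absurd h hL0
        · exact h
      have hz : (a * c - b ^ 2) * (ϱ₁ * ϱ₂) = 0 := by
        linear_combination (a * ϱ₂) * hLc - (b * ϱ₂) * e4
      exact hdisc ((mul_eq_zero.mp hz).resolve_right (ne_of_gt (mul_pos hϱ₁ hϱ₂)))
  · -- a ϱ₂ = b ϱ₁, so K = 0 leads to contradiction unless...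
    have hb : 0 < b := by nlinarith [sub_eq_zero.mp hKc]
    -- from e3 and hKc derive K*(b^2 - a*c) = 0 (times ϱ stuff)
    have hK0 : K = 0 := by
      by_contra hK0
      have : a * ϱ₂ = b * ϱ₁ := sub_eq_zero.mp hKc
      have key : K * (b ^ 2 - a * c) * ϱ₁ = 0 := by
        linear_combination a * e3 - (b * K - a * L) * this
      have h1 : K * (b ^ 2 - a * c) = 0 := by
        rcases mul_eq_zero.mp key with h | h
        · exact h
        · exact absurd h (ne_of_gt hϱ₁)
      rcases mul_eq_zero.mp h1 with h | h
      · exact hK0 h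
      · exact hdisc (by linarith [sub_eq_zero.mp h])
    refine ⟨hK0, ?_⟩
    rcases mul_eq_zero.mp e2 with hL0 | hLc
    · exact hL0
    · by_contra hL0
      have e4 : b * ϱ₁ - a * ϱ₂ = 0 := by
        have : L * (b * ϱ₁ - a * ϱ₂) = 0 := by
          subst hK0; nlinarith [e3]
        rcases mul_eq_zero.mp this with h | h
        · exact absurd h hL0
        · exact h
      have hz : (a * c - b ^ 2) * (ϱ₁ * ϱ₂) = 0 := by
        linear_combination (a * ϱ₂) * hLc - (b * ϱ₂) * e4
      exact hdisc ((mul_eq_zero.mp hz).resolve_right (ne_of_gt (mul_pos hϱ₁ hϱ₂)))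
end

section
/- Consider a kinetic planar quadratic system x' = A_1x^2+B_1xy+C_1y^2+D_1x+E_1y+F_1, y' = A_2x^2+B_2xy+C_2y^2+D_2x+E_2y+F_2 (with C_1,E_1,F_1,A_2,D_2,F_2 ≥ 0). If V(x,y) = a x^2 + 2b xy + c y^2 with a,b,c > 0 and ac = b^2 is a first integral, then there exist K,L,M,N ≥ 0 and S ∈ ℝ with x' = −bK x^2 + cS xy + cL y^2 − bM x + cN y and y' = aK x^2 − bS xy − bL y^2 + aM x − bN y. -/
/-- `V = a x² + 2b xy + c y²` with `a, b, c > 0`, `ac = b²`, as a first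
integral of a kinetic planar quadratic system. -/
theorem stmt_7 (A₁ B₁ C₁ D₁ E₁ F₁ A₂ B₂ C₂ D₂ E₂ F₂ a b c : ℝ)
    (hC₁ : 0 ≤ C₁) (hE₁ : 0 ≤ E₁) (hF₁ : 0 ≤ F₁)
    (hA₂ : 0 ≤ A₂) (hD₂ : 0 ≤ D₂) (hF₂ : 0 ≤ F₂)
    (ha : 0 < a) (hb : 0 < b) (hc : 0 < c) (hdisc : a * c = b ^ 2)
    (hfi : ∀ x y : ℝ,
      (2 * a * x + 2 * b * y) *
        (A₁ * x ^ 2 + B₁ * x * y + C₁ * y ^ 2 + D₁ * x + E₁ * y + F₁) +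
      (2 * b * x + 2 * c * y) *
        (A₂ * x ^ 2 + B₂ * x * y + C₂ * y ^ 2 + D₂ * x + E₂ * y + F₂) = 0) :
    ∃ K L M N S : ℝ, 0 ≤ K ∧ 0 ≤ L ∧ 0 ≤ M ∧ 0 ≤ N ∧
      (∀ x y : ℝ,
        A₁ * x ^ 2 + B₁ * x * y + C₁ * y ^ 2 + D₁ * x + E₁ * y + F₁ =
          -b * K * x ^ 2 + c * S * x * y + c * L * y ^ 2 - b * M * x + c * N * y) ∧
      (∀ x y : ℝ,
        A₂ * x ^ 2 + B₂ * x * y + C₂ * y ^ 2 + D₂ * x + E₂ * y + F₂ =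
          a * K * x ^ 2 - b * S * x * y - b * L * y ^ 2 + a * M * x - b * N * y) := by

  have h1 := hfi 1 0
  have h2 := hfi (-1) 0
  have h3 := hfi 2 0
  have h4 := hfi 0 1
  have h5 := hfi 0 (-1)
  have h6 := hfi 0 2
  have h7 := hfi 1 1
  have h8 := hfi 1 (-1)
  have h9 := hfi (-1) 1
  have e3 : a * A₁ + b * A₂ = 0 := by linear_combination (-1/4)*h1 + (-1/12)*h2 + (1/12)*h3
  have e20 : a * D₁ + b * D₂ = 0 := by linear_combination (1/4)*h1 + (1/4)*h2
  have e10 : a * F₁ + b * F₂ = 0 := by linear_combination (1/2)*h1 + (-1/6)*h2 + (-1/12)*h3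
  have e03 : b * C₁ + c * C₂ = 0 := by linear_combination (-1/4)*h4 + (-1/12)*h5 + (1/12)*h6
  have e02 : b * E₁ + c * E₂ = 0 := by linear_combination (1/4)*h4 + (1/4)*h5
  have e01 : b * F₁ + c * F₂ = 0 := by linear_combination (1/2)*h4 + (-1/6)*h5 + (-1/12)*h6
  have e12 : a * C₁ + b * B₁ + b * C₂ + c * B₂ = 0 := by
    linear_combination (-1/2)*h1 + (-1/4)*h4 + (-1/4)*h5 + (1/4)*h7 + (1/4)*h8
  clear hfi h1 h2 h3 h4 h5 h6 h7 h8 h9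
  have hF1 : F₁ = 0 := by
    have h2' : F₁ ≤ 0 := by
      have h1' : a * F₁ ≤ a * 0 := by nlinarith [mul_nonneg hb.le hF₂]
      exact (mul_le_mul_iff_right₀ ha).mp h1'
    linarith
  have hF2 : F₂ = 0 := by
    have h1' : b * F₂ = b * 0 := by nlinarith
    have := (mul_left_cancel₀ hb.ne' h1' : F₂ = 0)
    exact this
  have hbB' : c * (b * B₁ + c * B₂) = 0 := by linear_combination c * e12 - b * e03 - C₁ * hdisc
  have hbB : b * B₁ + c * B₂ = 0 := by
    rcases mul_eq_zero.mp hbB' with h | h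
    · exact absurd h hc.ne'
    · exact h
  have qA : A₁ = -b * (A₂ / a) := by field_simp; linear_combination e3
  have qD : D₁ = -b * (D₂ / a) := by field_simp; linear_combination e20
  have rB : B₂ = -b * (B₁ / c) := by field_simp; linear_combination hbB
  have rC : C₂ = -b * (C₁ / c) := by field_simp; linear_combination e03
  have rE : E₂ = -b * (E₁ / c) := by field_simp; linear_combination e02
  refine ⟨A₂ / a, C₁ / c, D₂ / a, E₁ / c, B₁ / c,
    div_nonneg hA₂ ha.le, div_nonneg hC₁ hc.le, div_nonneg hD₂ ha.le,
    div_nonneg hE₁ hc.le, ?_, ?_⟩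
  · intro x y
    rw [qA, qD, hF1]
    field_simp
    ring
  · intro x y
    rw [rB, rC, rE, hF2]
    field_simp
    ring
end

section
/- Consider a kinetic planar quadratic system as above. If V(x,y) = a x^2 − 2b xy + c y^2 with a,b,c > 0 and ac = b^2 is a first integral, then there exist K,L,M,N,R ≥ 0 and S ∈ ℝ with x' = bK x^2 + cS xy + cL y^2 + bM x + cN y + cR and y' = aK x^2 + bS xy + bL y^2 + aM x + bN y + bR. -/
/-- `V = a x² − 2b xy + c y²` with `a, b, c > 0`, `ac = b²`, as a first
integral of a kinetic planar quadratic system. -/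
theorem stmt_8 (A₁ B₁ C₁ D₁ E₁ F₁ A₂ B₂ C₂ D₂ E₂ F₂ a b c : ℝ)
    (hC₁ : 0 ≤ C₁) (hE₁ : 0 ≤ E₁) (hF₁ : 0 ≤ F₁)
    (hA₂ : 0 ≤ A₂) (hD₂ : 0 ≤ D₂) (hF₂ : 0 ≤ F₂)
    (ha : 0 < a) (hb : 0 < b) (hc : 0 < c) (hdisc : a * c = b ^ 2)
    (hfi : ∀ x y : ℝ,
      (2 * a * x - 2 * b * y) *
        (A₁ * x ^ 2 + B₁ * x * y + C₁ * y ^ 2 + D₁ * x + E₁ * y + F₁) +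
      (-(2 * b * x) + 2 * c * y) *
        (A₂ * x ^ 2 + B₂ * x * y + C₂ * y ^ 2 + D₂ * x + E₂ * y + F₂) = 0) :
    ∃ K L M N R S : ℝ, 0 ≤ K ∧ 0 ≤ L ∧ 0 ≤ M ∧ 0 ≤ N ∧ 0 ≤ R ∧
      (∀ x y : ℝ,
        A₁ * x ^ 2 + B₁ * x * y + C₁ * y ^ 2 + D₁ * x + E₁ * y + F₁ =
          b * K * x ^ 2 + c * S * x * y + c * L * y ^ 2 + b * M * x + c * N * y + c * R) ∧
      (∀ x y : ℝ,
        A₂ * x ^ 2 + B₂ * x * y + C₂ * y ^ 2 + D₂ * x + E₂ * y + F₂ =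
          a * K * x ^ 2 + b * S * x * y + b * L * y ^ 2 + a * M * x + b * N * y + b * R) := by

  have h10 := hfi 1 0
  have hm10 := hfi (-1) 0
  have h20 := hfi 2 0
  have h01 := hfi 0 1
  have h0m1 := hfi 0 (-1)
  have h02 := hfi 0 2
  have h11 := hfi 1 1
  have hm11 := hfi (-1) 1
  have e1 : a * A₁ - b * A₂ = 0 := by
    linear_combination (-1/4) * h10 + (-1/12) * hm10 + (1/12) * h20
  have e2 : a * B₁ - b * A₁ - b * B₂ + c * A₂ = 0 := by
    linear_combination (-1/4) * h10 + (-1/4) * hm10 + (-1/2) * h01 + (1/4) * h11 + (1/4) * hm11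
  have e4 : -(b * C₁) + c * C₂ = 0 := by
    linear_combination (-1/4) * h01 + (-1/12) * h0m1 + (1/12) * h02
  have e5 : a * D₁ - b * D₂ = 0 := by
    linear_combination (1/4) * h10 + (1/4) * hm10
  have e7 : -(b * E₁) + c * E₂ = 0 := by
    linear_combination (1/4) * h01 + (1/4) * h0m1
  have e8 : a * F₁ - b * F₂ = 0 := by
    linear_combination (1/2) * h10 + (-1/6) * hm10 + (-1/12) * h20
  have e9 : -(b * F₁) + c * F₂ = 0 := by
    linear_combination (1/2) * h01 + (-1/6) * h0m1 + (-1/12) * h02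
  have eB0 : a * (a * B₁ - b * B₂) = 0 := by
    linear_combination a * e2 + b * e1 - A₂ * hdisc
  have eB : a * B₁ - b * B₂ = 0 := by
    rcases mul_eq_zero.mp eB0 with h | h
    · exact absurd h ha.ne'
    · exact h
  refine ⟨A₂ / a, C₁ / c, D₂ / a, E₁ / c, F₁ / c, B₁ / c,
    div_nonneg hA₂ ha.le, div_nonneg hC₁ hc.le, div_nonneg hD₂ ha.le,
    div_nonneg hE₁ hc.le, div_nonneg hF₁ hc.le, ?_, ?_⟩
  · have hA : b * (A₂ / a) = A₁ := by field_simp; linarith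
    have hB : c * (B₁ / c) = B₁ := by field_simp
    have hCc : c * (C₁ / c) = C₁ := by field_simp
    have hD : b * (D₂ / a) = D₁ := by field_simp; linarith
    have hE : c * (E₁ / c) = E₁ := by field_simp
    have hF : c * (F₁ / c) = F₁ := by field_simp
    intro x y
    rw [hA, hB, hCc, hD, hE, hF]
  · have hA : a * (A₂ / a) = A₂ := by field_simp
    have hB0 : a * (b * B₁ - B₂ * c) = 0 := by
      linear_combination b * eB - B₂ * hdisc
    have hB : b * (B₁ / c) = B₂ := by
      field_simp
      rcases mul_eq_zero.mp hB0 with h | h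
      · exact absurd h ha.ne'
      · linarith
    have hCc : b * (C₁ / c) = C₂ := by field_simp; linarith
    have hD : a * (D₂ / a) = D₂ := by field_simp
    have hE : b * (E₁ / c) = E₂ := by field_simp; linarith
    have hF : b * (F₁ / c) = F₂ := by field_simp; linarith
    intro x y
    rw [hA, hB, hCc, hD, hE, hF]
end

section
/- Consider a kinetic planar quadratic system as above. If V(x,y) = a x^2 + 2b xy − c y^2 with a > 0, c > 0, b ≠ 0 is a first integral, then there exist K,L,M ≥ 0 with x' = −bK x^2 + (cK − bL)xy + cL y^2 − bM x + cM y and y' = aK x^2 + (bK + aL)xy + bL y^2 + aM x + bM y. -/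
private lemma cubic_coeffs (p0 p1 p2 p3 : ℝ)
    (h : ∀ x : ℝ, p0 + p1 * x + p2 * x ^ 2 + p3 * x ^ 3 = 0) :
    p0 = 0 ∧ p1 = 0 ∧ p2 = 0 ∧ p3 = 0 := by
  have h0 := h 0
  have h1 := h 1
  have hm := h (-1)
  have h2 := h 2
  norm_num at h0 h1 hm h2
  refine ⟨h0, by linarith, by linarith, by linarith⟩

/-- `V = a x² + 2b xy − c y²` with `a, c > 0`, `b ≠ 0`, as a first integral of
a kinetic planar quadratic system. -/
theorem stmt_9 (A₁ B₁ C₁ D₁ E₁ F₁ A₂ B₂ C₂ D₂ E₂ F₂ a b c : ℝ)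
    (hC₁ : 0 ≤ C₁) (hE₁ : 0 ≤ E₁) (hF₁ : 0 ≤ F₁)
    (hA₂ : 0 ≤ A₂) (hD₂ : 0 ≤ D₂) (hF₂ : 0 ≤ F₂)
    (ha : 0 < a) (hc : 0 < c) (hb : b ≠ 0)
    (hfi : ∀ x y : ℝ,
      (2 * a * x + 2 * b * y) *
        (A₁ * x ^ 2 + B₁ * x * y + C₁ * y ^ 2 + D₁ * x + E₁ * y + F₁) +
      (2 * b * x - 2 * c * y) *
        (A₂ * x ^ 2 + B₂ * x * y + C₂ * y ^ 2 + D₂ * x + E₂ * y + F₂) = 0) :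
    ∃ K L M : ℝ, 0 ≤ K ∧ 0 ≤ L ∧ 0 ≤ M ∧
      (∀ x y : ℝ,
        A₁ * x ^ 2 + B₁ * x * y + C₁ * y ^ 2 + D₁ * x + E₁ * y + F₁ =
          -b * K * x ^ 2 + (c * K - b * L) * x * y + c * L * y ^ 2 - b * M * x + c * M * y) ∧
      (∀ x y : ℝ,
        A₂ * x ^ 2 + B₂ * x * y + C₂ * y ^ 2 + D₂ * x + E₂ * y + F₂ =
          a * K * x ^ 2 + (b * K + a * L) * x * y + b * L * y ^ 2 + a * M * x + b * M * y) := by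
  -- Extract coefficients in x (for each fixed y)
  have key : ∀ y : ℝ,
      ((2*b*C₁ - 2*c*C₂)*y^3 + (2*b*E₁ - 2*c*E₂)*y^2 + (2*b*F₁ - 2*c*F₂)*y = 0) ∧
      ((2*a*C₁ + 2*b*B₁ - 2*c*B₂ + 2*b*C₂)*y^2 + (2*a*E₁ + 2*b*D₁ - 2*c*D₂ + 2*b*E₂)*y
          + (2*a*F₁ + 2*b*F₂) = 0) ∧
      ((2*a*B₁ + 2*b*A₁ - 2*c*A₂ + 2*b*B₂)*y + (2*a*D₁ + 2*b*D₂) = 0) ∧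
      (2*a*A₁ + 2*b*A₂ = 0) := fun y =>
    cubic_coeffs _ _ _ _ (fun x => by linear_combination hfi x y)
  have k0 := key 0
  have k1 := key 1
  have km := key (-1)
  have k2 := key 2
  norm_num at k0 k1 km k2
  obtain ⟨k01, k02, k03⟩ := k0
  obtain ⟨k11, k12, k13⟩ := k1
  obtain ⟨km1, km2, km3⟩ := km
  obtain ⟨k21, k22, _⟩ := k2
  -- coefficient equations
  have e1 : a*A₁ + b*A₂ = 0 := by linarith
  have e5 : a*D₁ + b*D₂ = 0 := by linarith
  have e2 : b*A₁ + a*B₁ + b*B₂ - c*A₂ = 0 := by linarith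
  have e8 : a*F₁ + b*F₂ = 0 := by linarith
  have e6 : a*E₁ + b*D₁ + b*E₂ - c*D₂ = 0 := by linarith
  have e3 : a*C₁ + b*B₁ + b*C₂ - c*B₂ = 0 := by linarith
  have e4 : b*C₁ - c*C₂ = 0 := by linarith
  have e7 : b*E₁ - c*E₂ = 0 := by linarith
  have e9 : b*F₁ - c*F₂ = 0 := by linarith
  have hP : a*c + b^2 ≠ 0 := by positivity
  -- F₁ = F₂ = 0
  have hF1 : F₁ = 0 := by
    have : (a*c + b^2) * F₁ = (a*c + b^2) * 0 := by linear_combination c*e8 + b*e9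
    exact mul_left_cancel₀ hP this
  have hF2 : F₂ = 0 := by
    have : c * F₂ = c * 0 := by linear_combination -e9 + b*hF1
    exact mul_left_cancel₀ hc.ne' this
  have hK : a*(A₂/a) = A₂ := by field_simp
  have hL : c*(C₁/c) = C₁ := by field_simp
  have hM : a*(D₂/a) = D₂ := by field_simp
  have h2 : A₁ = -b*(A₂/a) := by
    have : a * A₁ = a * (-b*(A₂/a)) := by linear_combination e1 + b*hK
    exact mul_left_cancel₀ ha.ne' this
  have h4 : C₂ = b*(C₁/c) := by
    have : c * C₂ = c * (b*(C₁/c)) := by linear_combination -e4 - b*hL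
    exact mul_left_cancel₀ hc.ne' this
  have hD1 : D₁ = -b*(D₂/a) := by
    have : a * D₁ = a * (-b*(D₂/a)) := by linear_combination e5 + b*hM
    exact mul_left_cancel₀ ha.ne' this
  have hB1 : B₁ = c*(A₂/a) - b*(C₁/c) := by
    have : (a*c + b^2) * B₁ = (a*c + b^2) * (c*(A₂/a) - b*(C₁/c)) := by
      linear_combination c*e2 + b*e3 - b*c*h2 - c^2*hK - b^2*h4 + a*b*hL
    exact mul_left_cancel₀ hP this
  have hB2 : B₂ = b*(A₂/a) + a*(C₁/c) := by
    have : (a*c + b^2) * B₂ = (a*c + b^2) * (b*(A₂/a) + a*(C₁/c)) := by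
      linear_combination b*e2 - a*e3 - b^2*h2 - b*c*hK + a*b*h4 - a^2*hL
    exact mul_left_cancel₀ hP this
  have hE1 : E₁ = c*(D₂/a) := by
    have : (a*c + b^2) * E₁ = (a*c + b^2) * (c*(D₂/a)) := by
      linear_combination c*e6 + b*e7 - b*c*hD1 - c^2*hM
    exact mul_left_cancel₀ hP this
  have hE2 : E₂ = b*(D₂/a) := by
    have : c * E₂ = c * (b*(D₂/a)) := by linear_combination -e7 + b*hE1
    exact mul_left_cancel₀ hc.ne' this
  refine ⟨A₂/a, C₁/c, D₂/a, div_nonneg hA₂ ha.le, div_nonneg hC₁ hc.le,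
    div_nonneg hD₂ ha.le, fun x y => by
      linear_combination x^2*h2 + x*y*hB1 - y^2*hL + x*hD1 + y*hE1 + hF1,
    fun x y => by
      linear_combination -x^2*hK + x*y*hB2 + y^2*h4 - x*hM + y*hE2 + hF2⟩
end

section
/- Consider a kinetic planar quadratic system as above. If V(x,y) = a x^2 + 2b xy with a > 0 and b ≠ 0 is a first integral, then there exist K, M ≥ 0 and S ∈ ℝ with x' = −bK x^2 − bS xy − bM x and y' = aK x^2 + (bK + aS)xy + bS y^2 + aM x + bM y. -/
/-- `V = a x² + 2b xy` with `a > 0`, `b ≠ 0`, as a first integral of a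
kinetic planar quadratic system. -/
theorem stmt_10 (A₁ B₁ C₁ D₁ E₁ F₁ A₂ B₂ C₂ D₂ E₂ F₂ a b : ℝ)
    (hC₁ : 0 ≤ C₁) (hE₁ : 0 ≤ E₁) (hF₁ : 0 ≤ F₁)
    (hA₂ : 0 ≤ A₂) (hD₂ : 0 ≤ D₂) (hF₂ : 0 ≤ F₂)
    (ha : 0 < a) (hb : b ≠ 0)
    (hfi : ∀ x y : ℝ,
      (2 * a * x + 2 * b * y) *
        (A₁ * x ^ 2 + B₁ * x * y + C₁ * y ^ 2 + D₁ * x + E₁ * y + F₁) +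
      (2 * b * x) *
        (A₂ * x ^ 2 + B₂ * x * y + C₂ * y ^ 2 + D₂ * x + E₂ * y + F₂) = 0) :
    ∃ K M S : ℝ, 0 ≤ K ∧ 0 ≤ M ∧
      (∀ x y : ℝ,
        A₁ * x ^ 2 + B₁ * x * y + C₁ * y ^ 2 + D₁ * x + E₁ * y + F₁ =
          -b * K * x ^ 2 - b * S * x * y - b * M * x) ∧
      (∀ x y : ℝ,
        A₂ * x ^ 2 + B₂ * x * y + C₂ * y ^ 2 + D₂ * x + E₂ * y + F₂ =
          a * K * x ^ 2 + (b * K + a * S) * x * y + b * S * y ^ 2 + a * M * x + b * M * y) := by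

  have e3 : 2*a*A₁ + 2*b*A₂ = 0 := by
    linear_combination (1/2) * hfi 0 0 + (-1/2) * hfi 1 0 + (-1/6) * hfi (-1) 0 + (1/6) * hfi 2 0
  have e21 : 2*b*A₁ + 2*a*B₁ + 2*b*B₂ = 0 := by
    linear_combination (-1/2) * hfi 0 0 + 1 * hfi 1 0 + (-1/2) * hfi 2 0 + (1/2) * hfi 0 1 + (-1) * hfi 1 1 + (1/2) * hfi 2 1
  have e12 : 2*b*B₁ + 2*a*C₁ + 2*b*C₂ = 0 := by
    linear_combination 1 * hfi 0 0 + (-1) * hfi 1 0 + (-1/2) * hfi 0 1 + (-1/2) * hfi 0 (-1) + (1/2) * hfi 1 1 + (1/2) * hfi 1 (-1)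
  have e03 : 2*b*C₁ = 0 := by
    linear_combination (1/2) * hfi 0 0 + (-1/2) * hfi 0 1 + (-1/6) * hfi 0 (-1) + (1/6) * hfi 0 2
  have e2 : 2*a*D₁ + 2*b*D₂ = 0 := by
    linear_combination (-1) * hfi 0 0 + (1/2) * hfi 1 0 + (1/2) * hfi (-1) 0
  have e11 : 2*b*D₁ + 2*a*E₁ + 2*b*E₂ = 0 := by
    linear_combination (1/2) * hfi 0 0 + (-1) * hfi 1 0 + (1/2) * hfi 2 0 + (-1) * hfi 0 1 + (1/2) * hfi 0 (-1) + (3/2) * hfi 1 1 + (-1/2) * hfi 1 (-1) + (-1/2) * hfi 2 1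
  have e02 : 2*b*E₁ = 0 := by
    linear_combination (-1) * hfi 0 0 + (1/2) * hfi 0 1 + (1/2) * hfi 0 (-1)
  have e1 : 2*a*F₁ + 2*b*F₂ = 0 := by
    linear_combination (-1/2) * hfi 0 0 + 1 * hfi 1 0 + (-1/3) * hfi (-1) 0 + (-1/6) * hfi 2 0
  have e01 : 2*b*F₁ = 0 := by
    linear_combination (-1/2) * hfi 0 0 + 1 * hfi 0 1 + (-1/3) * hfi 0 (-1) + (-1/6) * hfi 0 2
  have hC1 : C₁ = 0 := by
    rcases mul_eq_zero.mp e03 with h | h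
    · exact absurd (by linarith) hb
    · exact h
  have hF1 : F₁ = 0 := by
    rcases mul_eq_zero.mp e01 with h | h
    · exact absurd (by linarith) hb
    · exact h
  have hE1 : E₁ = 0 := by
    rcases mul_eq_zero.mp e02 with h | h
    · exact absurd (by linarith) hb
    · exact h
  have hF2 : F₂ = 0 := by
    have h : b * F₂ = 0 := by linear_combination (1/2) * e1 - a * hF1
    rcases mul_eq_zero.mp h with h' | h'
    · exact absurd h' hb
    · exact h'
  refine ⟨A₂ / a, D₂ / a, C₂ / b, div_nonneg hA₂ ha.le, div_nonneg hD₂ ha.le, ?_, ?_⟩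
  · intro x y
    have hA1 : A₁ = -b * (A₂ / a) := by
      field_simp
      linear_combination (1/2) * e3
    have hD1 : D₁ = -b * (D₂ / a) := by
      field_simp
      linear_combination (1/2) * e2
    have hB1 : B₁ = -b * (C₂ / b) := by
      field_simp
      have h : b * (B₁ + C₂) = 0 := by linear_combination (1/2) * e12 - a * hC1
      rcases mul_eq_zero.mp h with h' | h'
      · exact absurd h' hb
      · linear_combination h'
    rw [hA1, hD1, hB1, hC1, hE1, hF1]; ring
  · intro x y
    have hE2 : E₂ = b * (D₂ / a) := by
      have h : b * (a * E₂ - b * D₂) = 0 := by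
        linear_combination (a/2) * e11 - (b/2) * e2 - a^2 * hE1
      rcases mul_eq_zero.mp h with h' | h'
      · exact absurd h' hb
      · field_simp
        linear_combination h'
    have hB2 : B₂ = b * (A₂ / a) + a * (C₂ / b) := by
      have h : b * (a * b * B₂ - b^2 * A₂ - a^2 * C₂) = 0 := by
        linear_combination (a*b/2) * e21 - (b^2/2) * e3 - (a^2/2) * e12 + a^3 * hC1
      rcases mul_eq_zero.mp h with h' | h'
      · exact absurd h' hb
      · field_simp
        linear_combination h'
    rw [hE2, hB2, hF2]
    field_simp
    ring
end

section
/- If the kinetic planar quadratic system x' = −bK x^2 + (cK − bL)xy + cL y^2 − bM x + cM y, y' = aK x^2 + (bK + aL)xy + bL y^2 + aM x + bM y (a,c > 0, b ≠ 0, K,L,M ≥ 0) is kinetically mass conserving (there exist ϱ_1, ϱ_2 > 0 with ϱ_1 x' + ϱ_2 y' ≡ 0), then K = L = M = 0, so x' = y' = 0. -/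
/-- If the kinetic system of Theorem `eq2D-3` is kinetically mass conserving
then `K = L = M = 0`, so `x' = y' = 0`. -/
theorem stmt_11 (a b c K L M ϱ₁ ϱ₂ : ℝ)
    (ha : 0 < a) (hc : 0 < c) (hb : b ≠ 0)
    (hK : 0 ≤ K) (hL : 0 ≤ L) (hM : 0 ≤ M) (hϱ₁ : 0 < ϱ₁) (hϱ₂ : 0 < ϱ₂)
    (hmc : ∀ x y : ℝ,
      ϱ₁ * (-b * K * x ^ 2 + (c * K - b * L) * x * y + c * L * y ^ 2
              - b * M * x + c * M * y) +
      ϱ₂ * (a * K * x ^ 2 + (b * K + a * L) * x * y + b * L * y ^ 2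
              + a * M * x + b * M * y) = 0) :
    K = 0 ∧ L = 0 ∧ M = 0 := by
  have h1 := hmc 1 0
  have h2 := hmc (-1) 0
  have h3 := hmc 0 1
  have h4 := hmc 0 (-1)
  have h5 := hmc 1 1
  have eK : (ϱ₂ * a - ϱ₁ * b) * K = 0 := by linear_combination (h1 + h2) / 2
  have eM1 : (ϱ₂ * a - ϱ₁ * b) * M = 0 := by linear_combination (h1 - h2) / 2
  have eL : (ϱ₁ * c + ϱ₂ * b) * L = 0 := by linear_combination (h3 + h4) / 2
  have eM2 : (ϱ₁ * c + ϱ₂ * b) * M = 0 := by linear_combination (h3 - h4) / 2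
  have eXY : ϱ₁ * (c * K - b * L) + ϱ₂ * (b * K + a * L) = 0 := by
    linear_combination h5 - (h1 + h2) / 2 - (h3 + h4) / 2 - (h1 - h2) / 2 - (h3 - h4) / 2
  have hKz : K = 0 := by
    rcases hK.lt_or_eq with hKpos | h
    · exfalso
      have hab : ϱ₂ * a - ϱ₁ * b = 0 :=
        (mul_eq_zero.mp eK).resolve_right (ne_of_gt hKpos)
      have hbpos : 0 < b := by nlinarith
      nlinarith [mul_pos (mul_pos hϱ₁ hc) hKpos, mul_pos (mul_pos hϱ₂ hbpos) hKpos,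
        mul_nonneg (le_of_eq hab.symm) hL]
    · exact h.symm
  have hLz : L = 0 := by
    rcases hL.lt_or_eq with hLpos | h
    · exfalso
      have hcb : ϱ₁ * c + ϱ₂ * b = 0 :=
        (mul_eq_zero.mp eL).resolve_right (ne_of_gt hLpos)
      have hbneg : b < 0 := by nlinarith
      subst hKz
      nlinarith [mul_pos (mul_pos hϱ₂ ha) hLpos, mul_pos hϱ₁ hLpos]
    · exact h.symm
  have hMz : M = 0 := by
    rcases hM.lt_or_eq with hMpos | h
    · exfalso
      have hab : ϱ₂ * a - ϱ₁ * b = 0 :=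
        (mul_eq_zero.mp eM1).resolve_right (ne_of_gt hMpos)
      have hcb : ϱ₁ * c + ϱ₂ * b = 0 :=
        (mul_eq_zero.mp eM2).resolve_right (ne_of_gt hMpos)
      have hbpos : 0 < b := by nlinarith [mul_pos hϱ₂ ha]
      have hbneg : b < 0 := by nlinarith [mul_pos hϱ₁ hc]
      linarith
    · exact h.symm
  exact ⟨hKz, hLz, hMz⟩
end

section
/- Consider a kinetic planar quadratic system x' = F(x,y), y' = G(x,y) (each a quadratic polynomial; coefficients of monomials in F not containing x, and in G not containing y, are nonnegative). If V(x,y) = (x+a)^2 + (y+b)^2 with a ≥ 0, b ≥ 0 is a first integral, then there exist A, B ≥ 0 with F(x,y) = A y(y+b) − B x(y+b) and G(x,y) = B x(x+a) − A y(x+a). -/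
private lemma cubic_zero (c3 c2 c1 c0 : ℝ) (h : ∀ x : ℝ, c3*x^3+c2*x^2+c1*x+c0 = 0) :
    c3 = 0 ∧ c2 = 0 ∧ c1 = 0 ∧ c0 = 0 := by
  have h0 := h 0; have h1 := h 1; have h2 := h (-1); have h3 := h 2
  norm_num at h0 h1 h2 h3
  refine ⟨by linarith, by linarith, by linarith, by linarith⟩

/-- Shifted sum of squares `V(x,y) = (x+a)² + (y+b)²` (a, b ≥ 0) as a first
integral of a kinetic planar quadratic system. -/
theorem stmt_12 (A₁ B₁ C₁ D₁ E₁ F₁ A₂ B₂ C₂ D₂ E₂ F₂ a b : ℝ)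
    (F G : ℝ → ℝ → ℝ)
    (hFdef : ∀ x y, F x y =
      A₁ * x ^ 2 + B₁ * x * y + C₁ * y ^ 2 + D₁ * x + E₁ * y + F₁)
    (hGdef : ∀ x y, G x y =
      A₂ * x ^ 2 + B₂ * x * y + C₂ * y ^ 2 + D₂ * x + E₂ * y + F₂)
    -- kinetic: coefficients of monomials in F not containing x,
    -- and in G not containing y, are nonnegative
    (hC₁ : 0 ≤ C₁) (hE₁ : 0 ≤ E₁) (hF₁ : 0 ≤ F₁)
    (hA₂ : 0 ≤ A₂) (hD₂ : 0 ≤ D₂) (hF₂ : 0 ≤ F₂)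
    (ha : 0 ≤ a) (hb : 0 ≤ b)
    -- V is a first integral:
    (hfi : ∀ x y : ℝ, 2 * (x + a) * F x y + 2 * (y + b) * G x y = 0) :
    ∃ A B : ℝ, 0 ≤ A ∧ 0 ≤ B ∧
      (∀ x y : ℝ, F x y = A * y * (y + b) - B * x * (y + b)) ∧
      (∀ x y : ℝ, G x y = B * x * (x + a) - A * y * (x + a)) := by
  -- expand in powers of x, for each fixed y
  have key : ∀ y : ℝ, 2*A₁ = 0 ∧
      2*((B₁+A₂)*y + (D₁+a*A₁+b*A₂)) = 0 ∧
      2*((C₁+B₂)*y^2+(E₁+a*B₁+D₂+b*B₂)*y+(F₁+a*D₁+b*D₂)) = 0 ∧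
      2*(C₂*y^3+(a*C₁+E₂+b*C₂)*y^2+(a*E₁+F₂+b*E₂)*y+(a*F₁+b*F₂)) = 0 := by
    intro y
    refine cubic_zero _ _ _ _ (fun x => ?_)
    have h := hfi x y
    rw [hFdef, hGdef] at h
    linear_combination h
  have e1 : A₁ = 0 := by linarith [(key 0).1]
  -- x² coefficient: linear in y
  have q2 := fun y => (key y).2.1
  have e2 : B₁ + A₂ = 0 := by have h0 := q2 0; have h1 := q2 1; linarith
  have e3 : D₁ + a*A₁ + b*A₂ = 0 := by linarith [q2 0]
  -- x¹ coefficient: quadratic in y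
  have q1 := fun y => (key y).2.2.1
  have e4 : C₁ + B₂ = 0 := by
    have h0 := q1 0; have h1 := q1 1; have h2 := q1 (-1); norm_num at h1 h2; linarith
  have e5 : E₁ + a*B₁ + D₂ + b*B₂ = 0 := by
    have h1 := q1 1; have h2 := q1 (-1); norm_num at h1 h2; linarith
  have e6 : F₁ + a*D₁ + b*D₂ = 0 := by linarith [q1 0]
  -- x⁰ coefficient: cubic in y
  have q0 := fun y => (key y).2.2.2
  obtain ⟨e7, e8, e9, e10⟩ :=
    cubic_zero (2*C₂) (2*(a*C₁+E₂+b*C₂)) (2*(a*E₁+F₂+b*E₂)) (2*(a*F₁+b*F₂))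
      (fun y => by linear_combination q0 y)
  replace e7 : C₂ = 0 := by linarith
  replace e8 : a*C₁ + E₂ + b*C₂ = 0 := by linarith
  replace e9 : a*E₁ + F₂ + b*E₂ = 0 := by linarith
  replace e10 : a*F₁ + b*F₂ = 0 := by linarith
  -- derived relations
  have hD₁ : D₁ = -b*A₂ := by linear_combination e3 - a*e1
  have hE₂ : E₂ = -a*C₁ := by linear_combination e8 - b*e7
  have hFone : F₁ = b*(a*A₂ - D₂) := by linear_combination e6 - a*hD₁
  have hFtwo : F₂ = a*(b*C₁ - E₁) := by linear_combination e9 - b*hE₂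
  have huv : (a*A₂ - D₂) + (b*C₁ - E₁) = 0 := by linear_combination (-1)*e5 + a*e2 + b*e4
  have haF : a*F₁ = 0 := by
    nlinarith [mul_nonneg ha hF₁, mul_nonneg hb hF₂]
  -- case analysis to get u = 0
  have hu : a*A₂ - D₂ = 0 := by
    rcases ha.lt_or_eq with hap | hae
    · -- a > 0
      have hF1z : F₁ = 0 := by
        rcases mul_eq_zero.mp haF with h' | h'
        · exact absurd h' (ne_of_gt hap)
        · exact h'
      rcases hb.lt_or_eq with hbp | hbe
      · -- b > 0 : b*u = F₁ = 0
        have hbu : b * (a*A₂ - D₂) = 0 := by rw [← hFone]; exact hF1z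
        exact (mul_eq_zero.mp hbu).resolve_left (ne_of_gt hbp)
      · -- b = 0
        subst hbe
        nlinarith [hFtwo, hF₂, hE₁, huv, mul_nonneg (le_of_lt hap) hE₁]
    · -- a = 0
      subst hae
      rcases hb.lt_or_eq with hbp | hbe
      · nlinarith [hFone, hF₁, hD₂, mul_nonneg (le_of_lt hbp) hD₂]
      · subst hbe; nlinarith [huv, hD₂, hE₁]
  have hv : b*C₁ - E₁ = 0 := by linarith
  have hF1z : F₁ = 0 := by rw [hFone, hu, mul_zero]
  have hF2z : F₂ = 0 := by rw [hFtwo, hv, mul_zero]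
  refine ⟨C₁, A₂, hC₁, hA₂, fun x y => ?_, fun x y => ?_⟩
  · rw [hFdef]
    linear_combination x^2*e1 + x*y*e2 + x*hD₁ - y*hv + hF1z
  · rw [hGdef]
    linear_combination x*y*e4 + y^2*e7 - x*hu + y*hE₂ + hF2z
end

section
/- Among all planar polynomial systems x' = a x^2 + b x y + c y^2 + d x + e y + f, y' = A x^2 + B x y + C y^2 + D x + E y + F defined on the open positive quadrant, the only ones admitting V(x,y) = x + y − ln x − ln y as a first integral are x' = b x y − b x, y' = −b x y + b y (for an arbitrary real b). -/
/-- Among planar quadratic polynomial systems on the open positive quadrant,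
the only ones with `V(x,y) = x + y − ln x − ln y` as a first integral are the
Lotka–Volterra equations `x' = b x y − b x`, `y' = −b x y + b y`. -/
theorem stmt_14 (a b c d e f A B C D E F : ℝ) :
    (∀ x y : ℝ, 0 < x → 0 < y →
      (1 - 1 / x) * (a * x ^ 2 + b * x * y + c * y ^ 2 + d * x + e * y + f) +
      (1 - 1 / y) * (A * x ^ 2 + B * x * y + C * y ^ 2 + D * x + E * y + F) = 0)
    ↔
    (a = 0 ∧ c = 0 ∧ d = -b ∧ e = 0 ∧ f = 0 ∧
     A = 0 ∧ B = -b ∧ C = 0 ∧ D = 0 ∧ E = b ∧ F = 0) := by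
  constructor
  · intro h
    have h1 := h 1 2 one_pos two_pos
    have h2 := h 1 3 one_pos (by norm_num)
    have h3 := h 1 4 one_pos (by norm_num)
    have h4 := h 2 1 two_pos one_pos
    have h5 := h 2 2 two_pos two_pos
    have h6 := h 2 3 two_pos (by norm_num)
    have h7 := h 2 4 two_pos (by norm_num)
    have h8 := h 3 1 (by norm_num) one_pos
    have h9 := h 3 2 (by norm_num) two_pos
    have h10 := h 3 3 (by norm_num) (by norm_num)
    have h12 := h 4 1 (by norm_num) one_pos
    refine ⟨?_, ?_, ?_, ?_, ?_, ?_, ?_, ?_, ?_, ?_, ?_⟩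
    · linear_combination (1:ℝ) * h4 + (-3/2:ℝ) * h8 + (2/3:ℝ) * h12
    · linear_combination (-2:ℝ) * h1 + (3:ℝ) * h2 + (-4/3:ℝ) * h3 + (-1/3:ℝ) * h4 + (2:ℝ) * h5 + (-3:ℝ) * h6 + (4/3:ℝ) * h7
    · linear_combination (-7:ℝ) * h4 + (9:ℝ) * h8 + (-10/3:ℝ) * h12
    · linear_combination (18:ℝ) * h1 + (-45/2:ℝ) * h2 + (8:ℝ) * h3 + (5:ℝ) * h4 + (-24:ℝ) * h5 + (27:ℝ) * h6 + (-8:ℝ) * h7 + (-3/2:ℝ) * h8 + (6:ℝ) * h9 + (-9/2:ℝ) * h10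
    · linear_combination (-16:ℝ) * h1 + (39/2:ℝ) * h2 + (-20/3:ℝ) * h3 + (22/3:ℝ) * h4 + (22:ℝ) * h5 + (-24:ℝ) * h6 + (20/3:ℝ) * h7 + (-21/2:ℝ) * h8 + (-6:ℝ) * h9 + (9/2:ℝ) * h10 + (4:ℝ) * h12
    · linear_combination (5:ℝ) * h1 + (-9/2:ℝ) * h2 + (4/3:ℝ) * h3 + (10/3:ℝ) * h4 + (-8:ℝ) * h5 + (6:ℝ) * h6 + (-4/3:ℝ) * h7 + (-3/2:ℝ) * h8 + (3:ℝ) * h9 + (-3/2:ℝ) * h10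
    · linear_combination (-1:ℝ) * h1 + (3/4:ℝ) * h2 + (-1:ℝ) * h4 + (4:ℝ) * h5 + (-3:ℝ) * h6 + (3/4:ℝ) * h8 + (-3:ℝ) * h9 + (9/4:ℝ) * h10
    · linear_combination (1:ℝ) * h1 + (-3/2:ℝ) * h2 + (2/3:ℝ) * h3
    · linear_combination (-27:ℝ) * h1 + (51/2:ℝ) * h2 + (-8:ℝ) * h3 + (-14:ℝ) * h4 + (36:ℝ) * h5 + (-30:ℝ) * h6 + (8:ℝ) * h7 + (9/2:ℝ) * h8 + (-9:ℝ) * h9 + (9/2:ℝ) * h10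
    · linear_combination (-6:ℝ) * h1 + (33/4:ℝ) * h2 + (-10/3:ℝ) * h3 + (1:ℝ) * h4 + (-4:ℝ) * h5 + (3:ℝ) * h6 + (-3/4:ℝ) * h8 + (3:ℝ) * h9 + (-9/4:ℝ) * h10
    · linear_combination (34:ℝ) * h1 + (-33:ℝ) * h2 + (32/3:ℝ) * h3 + (32/3:ℝ) * h4 + (-28:ℝ) * h5 + (24:ℝ) * h6 + (-20/3:ℝ) * h7 + (-3:ℝ) * h8 + (6:ℝ) * h9 + (-3:ℝ) * h10
  · rintro ⟨rfl, rfl, rfl, rfl, rfl, rfl, rfl, rfl, rfl, rfl, rfl⟩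
    intro x y hx hy
    field_simp
    ring
end

section
/- Let K, L ≥ 1 and consider a quadratic polynomial system x_k' = X_k, y_l' = Y_l, z' = Z on ℝ^{K+L+1} that is kinetic and kinetically mass conserving with positive weights ϱ^x_k, ϱ^y_l, ϱ^z. If V = Σ_k a_k x_k^2 − Σ_l b_l y_l^2 (all a_k, b_l > 0) is a first integral, then there exist A_{k,l} ≥ 0 such that X_k = Σ_l b_l A_{k,l} y_l z, Y_l = Σ_k a_k A_{k,l} x_k z, and Z = −(Σ_k ϱ^x_k X_k + Σ_l ϱ^y_l Y_l)/ϱ^z. -/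
/-- Embedding of an `x`-index into the combined index set of the variables
`x_1,…,x_K, y_1,…,y_L, z`. -/
def ixIdx (K L : ℕ) (k : Fin K) : Fin (K + L + 1) := ⟨k.1, by have := k.2; omega⟩

/-- Embedding of a `y`-index. -/
def iyIdx (K L : ℕ) (l : Fin L) : Fin (K + L + 1) := ⟨K + l.1, by have := l.2; omega⟩

/-- The index of the variable `z`. -/
def izIdx (K L : ℕ) : Fin (K + L + 1) := ⟨K + L, by omega⟩

open Finset

section gen
variable {n : ℕ}

lemma linear_coeff (E : Fin n → ℝ) (h : ∀ x : Fin n → ℝ, ∑ a, E a * x a = 0) (i : Fin n) :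
    E i = 0 := by
  have := h (fun m => if m = i then 1 else 0)
  simpa [mul_ite] using this

lemma quad_diag (M : Fin n → Fin n → ℝ) (h : ∀ x : Fin n → ℝ, ∑ a, ∑ b, M a b * x a * x b = 0)
    (i : Fin n) : M i i = 0 := by
  have := h (fun m => if m = i then 1 else 0)
  simpa [mul_ite, ite_mul] using this

lemma quad_off (M : Fin n → Fin n → ℝ) (h : ∀ x : Fin n → ℝ, ∑ a, ∑ b, M a b * x a * x b = 0)
    (i j : Fin n) : M i j + M j i = 0 := by
  have h1 := quad_diag M h i
  have h2 := quad_diag M h j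
  have h3 := h (fun m => (if m = i then 1 else 0) + (if m = j then 1 else 0))
  simp [mul_ite, ite_mul, mul_add, add_mul, Finset.sum_add_distrib] at h3
  linarith

lemma cubic_diag (C : Fin n → Fin n → Fin n → ℝ)
    (h : ∀ x : Fin n → ℝ, ∑ a, ∑ b, ∑ c, C a b c * x a * x b * x c = 0) (i : Fin n) :
    C i i i = 0 := by
  have := h (fun m => if m = i then 1 else 0)
  simpa [mul_ite, ite_mul] using this

lemma cubic_two (C : Fin n → Fin n → Fin n → ℝ)
    (h : ∀ x : Fin n → ℝ, ∑ a, ∑ b, ∑ c, C a b c * x a * x b * x c = 0)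
    (i j : Fin n) : C i i j + C i j i + C j i i = 0 := by
  have d1 := cubic_diag C h i
  have d2 := cubic_diag C h j
  have e1 := h (fun m => (if m = i then 1 else 0) + (if m = j then 1 else 0))
  have e2 := h (fun m => (if m = i then 1 else 0) + (if m = j then -1 else 0))
  simp [mul_ite, ite_mul, mul_add, add_mul, Finset.sum_add_distrib] at e1 e2
  linarith

lemma cubic_three (C : Fin n → Fin n → Fin n → ℝ)
    (h : ∀ x : Fin n → ℝ, ∑ a, ∑ b, ∑ c, C a b c * x a * x b * x c = 0)
    (i j k : Fin n) :
    C i j k + C i k j + C j i k + C j k i + C k i j + C k j i = 0 := by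
  have d1 := cubic_diag C h i
  have d2 := cubic_diag C h j
  have d3 := cubic_diag C h k
  have t12 := cubic_two C h i j
  have t21 := cubic_two C h j i
  have t13 := cubic_two C h i k
  have t31 := cubic_two C h k i
  have t23 := cubic_two C h j k
  have t32 := cubic_two C h k j
  have e := h (fun m => (if m = i then 1 else 0) + (if m = j then 1 else 0) +
    (if m = k then 1 else 0))
  simp [mul_ite, ite_mul, mul_add, add_mul, Finset.sum_add_distrib] at e
  linarith

lemma homog_qq (M : Fin n → Fin n → ℝ) (x : Fin n → ℝ) (t : ℝ) :
    ∑ b, ∑ c, M b c * (t * x b) * (t * x c) = t ^ 2 * ∑ b, ∑ c, M b c * x b * x c := by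
  rw [Finset.mul_sum]
  refine Finset.sum_congr rfl fun b _ => ?_
  rw [Finset.mul_sum]
  exact Finset.sum_congr rfl fun c _ => by ring

lemma homog_ll (r : Fin n → ℝ) (x : Fin n → ℝ) (t : ℝ) :
    ∑ b, r b * (t * x b) = t * ∑ b, r b * x b := by
  rw [Finset.mul_sum]; exact Finset.sum_congr rfl fun b _ => by ring

lemma flat3 (W : Fin n → ℝ) (Q : Fin n → Fin n → Fin n → ℝ) (x : Fin n → ℝ) :
    ∑ a, W a * x a * (∑ b, ∑ c, Q a b c * x b * x c)
      = ∑ a, ∑ b, ∑ c, (W a * Q a b c) * x a * x b * x c := by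
  refine Finset.sum_congr rfl fun a _ => ?_
  rw [Finset.mul_sum]
  refine Finset.sum_congr rfl fun b _ => ?_
  rw [Finset.mul_sum]
  exact Finset.sum_congr rfl fun c _ => by ring

lemma flat2 (W : Fin n → ℝ) (R : Fin n → Fin n → ℝ) (x : Fin n → ℝ) :
    ∑ a, W a * x a * (∑ b, R a b * x b) = ∑ a, ∑ b, (W a * R a b) * x a * x b := by
  refine Finset.sum_congr rfl fun a _ => ?_
  rw [Finset.mul_sum]
  exact Finset.sum_congr rfl fun b _ => by ring

lemma flat1 (W : Fin n → ℝ) (c : Fin n → ℝ) (x : Fin n → ℝ) :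
    ∑ a, W a * x a * c a = ∑ a, (W a * c a) * x a :=
  Finset.sum_congr rfl fun a _ => by ring

lemma interch2 (ϱ : Fin n → ℝ) (Q : Fin n → Fin n → Fin n → ℝ) (x : Fin n → ℝ) :
    ∑ i, ϱ i * (∑ b, ∑ c, Q i b c * x b * x c)
      = ∑ b, ∑ c, (∑ i, ϱ i * Q i b c) * x b * x c := by
  have h : ∀ i, ϱ i * (∑ b, ∑ c, Q i b c * x b * x c)
      = ∑ b, ∑ c, (ϱ i * Q i b c) * x b * x c := fun i => by
    rw [Finset.mul_sum]
    refine Finset.sum_congr rfl fun b _ => ?_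
    rw [Finset.mul_sum]
    exact Finset.sum_congr rfl fun c _ => by ring
  simp_rw [h]
  rw [Finset.sum_comm]
  refine Finset.sum_congr rfl fun b _ => ?_
  rw [Finset.sum_comm]
  refine Finset.sum_congr rfl fun c _ => ?_
  rw [Finset.sum_mul, Finset.sum_mul]

lemma interch1 (ϱ : Fin n → ℝ) (R : Fin n → Fin n → ℝ) (x : Fin n → ℝ) :
    ∑ i, ϱ i * (∑ b, R i b * x b) = ∑ b, (∑ i, ϱ i * R i b) * x b := by
  have h : ∀ i, ϱ i * (∑ b, R i b * x b) = ∑ b, (ϱ i * R i b) * x b := fun i => by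
    rw [Finset.mul_sum]; exact Finset.sum_congr rfl fun b _ => by ring
  simp_rw [h]
  rw [Finset.sum_comm]
  refine Finset.sum_congr rfl fun b _ => ?_
  rw [Finset.sum_mul]

end gen

section idx
variable {K L : ℕ}

lemma sum_split (f : Fin (K + L + 1) → ℝ) :
    ∑ i, f i = (∑ k, f (ixIdx K L k)) + (∑ l, f (iyIdx K L l)) + f (izIdx K L) := by
  rw [Fin.sum_univ_castSucc, Fin.sum_univ_add]
  rfl

lemma idx_cases (i : Fin (K + L + 1)) :
    (∃ k, i = ixIdx K L k) ∨ (∃ l, i = iyIdx K L l) ∨ i = izIdx K L := by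
  rcases lt_or_ge i.1 K with h | h
  · exact Or.inl ⟨⟨i.1, h⟩, by simp [ixIdx, Fin.ext_iff]⟩
  rcases lt_or_ge i.1 (K + L) with h2 | h2
  · refine Or.inr (Or.inl ⟨⟨i.1 - K, by omega⟩, ?_⟩)
    simp [iyIdx, Fin.ext_iff]; omega
  · refine Or.inr (Or.inr ?_)
    have := i.2
    simp [izIdx, Fin.ext_iff]; omega

lemma ix_ne_iy (k : Fin K) (l : Fin L) : ixIdx K L k ≠ iyIdx K L l := by
  have := k.2; simp [ixIdx, iyIdx, Fin.ext_iff]; omega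

lemma ix_ne_iz (k : Fin K) : ixIdx K L k ≠ izIdx K L := by
  have := k.2; simp [ixIdx, izIdx, Fin.ext_iff]; omega

lemma iy_ne_iz (l : Fin L) : iyIdx K L l ≠ izIdx K L := by
  have := l.2; simp [iyIdx, izIdx, Fin.ext_iff]; omega

lemma ix_inj {k k' : Fin K} (h : ixIdx K L k = ixIdx K L k') : k = k' := by
  simpa [ixIdx, Fin.ext_iff] using h

lemma iy_inj {l l' : Fin L} (h : iyIdx K L l = iyIdx K L l') : l = l' := by
  simpa [iyIdx, Fin.ext_iff] using h

end idx

open Finset in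
/-- A kinetic, kinetically mass conserving quadratic system on
`ℝ^(K+L+1)` having `V = Σ a_k x_k² − Σ b_l y_l²` (all `a_k, b_l > 0`) as a
first integral must have the form `X_k = Σ_l b_l A_{k,l} y_l z`,
`Y_l = Σ_k a_k A_{k,l} x_k z`, `Z = −(Σ ϱ^x_k X_k + Σ ϱ^y_l Y_l)/ϱ^z`
with `A_{k,l} ≥ 0`. -/
theorem stmt_16 (K L : ℕ) (hK : 1 ≤ K) (hL : 1 ≤ L)
    (Q : Fin (K + L + 1) → Fin (K + L + 1) → Fin (K + L + 1) → ℝ)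
    (R : Fin (K + L + 1) → Fin (K + L + 1) → ℝ)
    (c : Fin (K + L + 1) → ℝ)
    (P : Fin (K + L + 1) → (Fin (K + L + 1) → ℝ) → ℝ)
    -- P is a quadratic polynomial system:
    (hP : ∀ i x, P i x =
      (∑ j, ∑ k, Q i j k * x j * x k) + (∑ j, R i j * x j) + c i)
    -- the system is kinetic (monomials not containing the own variable
    -- have nonnegative coefficients):
    (hQ1 : ∀ i j, j ≠ i → 0 ≤ Q i j j)
    (hQ2 : ∀ i j k, j ≠ i → k ≠ i → j ≠ k → 0 ≤ Q i j k + Q i k j)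
    (hR : ∀ i j, j ≠ i → 0 ≤ R i j)
    (hc : ∀ i, 0 ≤ c i)
    -- the system is kinetically mass conserving with positive weights ϱ:
    (ϱ : Fin (K + L + 1) → ℝ) (hϱ : ∀ i, 0 < ϱ i)
    (hmc : ∀ x : Fin (K + L + 1) → ℝ, ∑ i, ϱ i * P i x = 0)
    -- V = Σ a_k x_k² − Σ b_l y_l² is a first integral:
    (a : Fin K → ℝ) (b : Fin L → ℝ)
    (hapos : ∀ k, 0 < a k) (hbpos : ∀ l, 0 < b l)
    (hfi : ∀ x : Fin (K + L + 1) → ℝ,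
      (∑ k, 2 * a k * x (ixIdx K L k) * P (ixIdx K L k) x) -
      (∑ l, 2 * b l * x (iyIdx K L l) * P (iyIdx K L l) x) = 0) :
    ∃ A : Fin K → Fin L → ℝ, (∀ k l, 0 ≤ A k l) ∧
      (∀ x k, P (ixIdx K L k) x =
        ∑ l, b l * A k l * x (iyIdx K L l) * x (izIdx K L)) ∧
      (∀ x l, P (iyIdx K L l) x =
        ∑ k, a k * A k l * x (ixIdx K L k) * x (izIdx K L)) ∧
      (∀ x, P (izIdx K L) x =
        -(((∑ k, ϱ (ixIdx K L k) * P (ixIdx K L k) x) +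
           (∑ l, ϱ (iyIdx K L l) * P (iyIdx K L l) x)) / ϱ (izIdx K L))) := by
  classical
  set W : Fin (K + L + 1) → ℝ := fun i =>
    if h : (i : ℕ) < K then 2 * a ⟨i, h⟩
    else if h2 : (i : ℕ) - K < L then -(2 * b ⟨(i : ℕ) - K, h2⟩) else 0 with hWdef
  have hWx : ∀ k, W (ixIdx K L k) = 2 * a k := by
    intro k
    simp only [hWdef, ixIdx]
    rw [dif_pos k.2]
  have hWy : ∀ l, W (iyIdx K L l) = -(2 * b l) := by
    intro l
    have hl := l.2
    simp only [hWdef, iyIdx]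
    rw [dif_neg (by omega), dif_pos (show K + (l : ℕ) - K < L by omega)]
    have : (⟨K + (l : ℕ) - K, show K + (l : ℕ) - K < L by omega⟩ : Fin L) = l :=
      Fin.ext (by simp)
    rw [this]
  have hWz : W (izIdx K L) = 0 := by
    simp only [hWdef, izIdx]
    rw [dif_neg (by omega), dif_neg (by omega)]
  have hWne : ∀ i, i ≠ izIdx K L → W i ≠ 0 := by
    intro i hi
    rcases idx_cases i with ⟨k, rfl⟩ | ⟨l, rfl⟩ | rfl
    · rw [hWx]; have := hapos k; positivity
    · rw [hWy]; have := hbpos l; intro h; nlinarith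
    · exact absurd rfl hi
  -- rewritten first-integral identity
  have hfiW : ∀ x : Fin (K + L + 1) → ℝ, ∑ i, W i * x i * P i x = 0 := by
    intro x
    rw [sum_split (f := fun i => W i * x i * P i x)]
    have h1 : ∑ k, W (ixIdx K L k) * x (ixIdx K L k) * P (ixIdx K L k) x
        = ∑ k, 2 * a k * x (ixIdx K L k) * P (ixIdx K L k) x :=
      Finset.sum_congr rfl fun k _ => by rw [hWx]
    have h2 : ∑ l, W (iyIdx K L l) * x (iyIdx K L l) * P (iyIdx K L l) x
        = -∑ l, 2 * b l * x (iyIdx K L l) * P (iyIdx K L l) x := by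
      rw [← Finset.sum_neg_distrib]
      exact Finset.sum_congr rfl fun l _ => by rw [hWy]; ring
    rw [h1, h2, hWz, zero_mul, zero_mul, add_zero]
    have := hfi x
    linarith
  -- homogeneous decomposition of the first-integral identity
  have key : ∀ (x : Fin (K + L + 1) → ℝ) (t : ℝ),
      t ^ 3 * (∑ a', ∑ b', ∑ c', (W a' * Q a' b' c') * x a' * x b' * x c')
      + t ^ 2 * (∑ a', ∑ b', (W a' * R a' b') * x a' * x b')
      + t * (∑ a', (W a' * c a') * x a') = 0 := by
    intro x t
    have h0 := hfiW (fun m => t * x m)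
    simp only [hP] at h0
    simp only [homog_qq] at h0
    simp only [homog_ll] at h0
    have e3 : ∑ i, W i * (t * x i) *
        (t ^ 2 * (∑ j, ∑ k, Q i j k * x j * x k) + (t * ∑ j, R i j * x j) + c i)
        = t ^ 3 * (∑ i, W i * x i * (∑ j, ∑ k, Q i j k * x j * x k))
          + t ^ 2 * (∑ i, W i * x i * (∑ j, R i j * x j))
          + t * (∑ i, W i * x i * c i) := by
      rw [Finset.mul_sum, Finset.mul_sum, Finset.mul_sum, ← Finset.sum_add_distrib,
        ← Finset.sum_add_distrib]
      exact Finset.sum_congr rfl fun i _ => by ring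
    rw [e3] at h0
    rw [flat3, flat2, flat1] at h0
    exact h0
  have hFA : ∀ x : Fin (K + L + 1) → ℝ,
      ∑ a', ∑ b', ∑ c', (W a' * Q a' b' c') * x a' * x b' * x c' = 0 := by
    intro x
    have k1 := key x 1
    have k2 := key x (-1)
    have k3 := key x 2
    norm_num at k1 k2 k3
    linarith
  have hFB : ∀ x : Fin (K + L + 1) → ℝ,
      ∑ a', ∑ b', (W a' * R a' b') * x a' * x b' = 0 := by
    intro x
    have k1 := key x 1
    have k2 := key x (-1)
    norm_num at k1 k2
    linarith
  have hFC : ∀ x : Fin (K + L + 1) → ℝ, ∑ a', (W a' * c a') * x a' = 0 := by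
    intro x
    have k1 := key x 1
    have k2 := key x (-1)
    have k3 := key x 2
    norm_num at k1 k2 k3
    linarith
  -- homogeneous decomposition of mass conservation
  have mkey : ∀ (x : Fin (K + L + 1) → ℝ) (t : ℝ),
      t ^ 2 * (∑ b', ∑ c', (∑ i, ϱ i * Q i b' c') * x b' * x c')
      + t * (∑ b', (∑ i, ϱ i * R i b') * x b') + (∑ i, ϱ i * c i) = 0 := by
    intro x t
    have h0 := hmc (fun m => t * x m)
    simp only [hP] at h0
    simp only [homog_qq] at h0
    simp only [homog_ll] at h0
    have e3 : ∑ i, ϱ i *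
        (t ^ 2 * (∑ j, ∑ k, Q i j k * x j * x k) + (t * ∑ j, R i j * x j) + c i)
        = t ^ 2 * (∑ i, ϱ i * (∑ j, ∑ k, Q i j k * x j * x k))
          + t * (∑ i, ϱ i * (∑ j, R i j * x j)) + (∑ i, ϱ i * c i) := by
      rw [Finset.mul_sum, Finset.mul_sum, ← Finset.sum_add_distrib, ← Finset.sum_add_distrib]
      exact Finset.sum_congr rfl fun i _ => by ring
    rw [e3] at h0
    rw [interch2, interch1] at h0
    exact h0
  have hGA : ∀ x : Fin (K + L + 1) → ℝ,
      ∑ b', ∑ c', (∑ i, ϱ i * Q i b' c') * x b' * x c' = 0 := by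
    intro x
    have k0 := mkey x 0
    have k1 := mkey x 1
    have k2 := mkey x (-1)
    norm_num at k0 k1 k2
    linarith
  have hGB : ∀ x : Fin (K + L + 1) → ℝ,
      ∑ b', (∑ i, ϱ i * R i b') * x b' = 0 := by
    intro x
    have k0 := mkey x 0
    have k1 := mkey x 1
    have k2 := mkey x (-1)
    norm_num at k0 k1 k2
    linarith
  -- coefficient identities
  have cub1 : ∀ i, W i * Q i i i = 0 := fun i =>
    cubic_diag (fun a' b' c' => W a' * Q a' b' c') hFA i
  have cub2 : ∀ i j, W i * Q i i j + W i * Q i j i + W j * Q j i i = 0 := fun i j =>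
    cubic_two (fun a' b' c' => W a' * Q a' b' c') hFA i j
  have cub3 : ∀ i j k, W i * Q i j k + W i * Q i k j + W j * Q j i k + W j * Q j k i
      + W k * Q k i j + W k * Q k j i = 0 := fun i j k =>
    cubic_three (fun a' b' c' => W a' * Q a' b' c') hFA i j k
  have quadRd : ∀ i, W i * R i i = 0 := fun i =>
    quad_diag (fun a' b' => W a' * R a' b') hFB i
  have quadRo : ∀ i j, W i * R i j + W j * R j i = 0 := fun i j =>
    quad_off (fun a' b' => W a' * R a' b') hFB i j
  have linc : ∀ i, W i * c i = 0 := fun i => linear_coeff (fun a' => W a' * c a') hFC i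
  have mcQd : ∀ b', (∑ i, ϱ i * Q i b' b') = 0 := fun b' =>
    quad_diag (fun b' c' => ∑ i, ϱ i * Q i b' c') hGA b'
  have mcQo : ∀ b' c', (∑ i, ϱ i * Q i b' c') + (∑ i, ϱ i * Q i c' b') = 0 := fun b' c' =>
    quad_off (fun b' c' => ∑ i, ϱ i * Q i b' c') hGA b' c'
  have mcR : ∀ b', (∑ i, ϱ i * R i b') = 0 := fun b' =>
    linear_coeff (fun b' => ∑ i, ϱ i * R i b') hGB b'
  -- structural consequences
  have alpha : ∀ i, i ≠ izIdx K L → Q i i i = 0 := by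
    intro i hi
    rcases mul_eq_zero.mp (cub1 i) with h | h
    · exact absurd h (hWne i hi)
    · exact h
  have beta1 : ∀ b', b' ≠ izIdx K L → ∀ i, Q i b' b' = 0 := by
    intro b' hb i
    have hnn : ∀ j ∈ Finset.univ, (0:ℝ) ≤ ϱ j * Q j b' b' := by
      intro j _
      rcases eq_or_ne j b' with rfl | hjb
      · rw [alpha j hb]; simp
      · exact mul_nonneg (hϱ j).le (hQ1 j b' hjb.symm)
    have h := (Finset.sum_eq_zero_iff_of_nonneg hnn).mp (mcQd b') i (Finset.mem_univ i)
    rcases mul_eq_zero.mp h with h' | h'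
    · exact absurd h' (hϱ i).ne'
    · exact h'
  have beta2 : ∀ i, i ≠ izIdx K L → Q i (izIdx K L) (izIdx K L) = 0 := by
    intro i hi
    have h := cub2 (izIdx K L) i
    rw [hWz] at h
    simp only [zero_mul, zero_add] at h
    rcases mul_eq_zero.mp h with h' | h'
    · exact absurd h' (hWne i hi)
    · exact h'
  have betaall : ∀ i b', i ≠ izIdx K L → Q i b' b' = 0 := by
    intro i b' hi
    rcases eq_or_ne b' (izIdx K L) with rfl | hb
    · exact beta2 i hi
    · exact beta1 b' hb i
  have gamma : ∀ j k, j ≠ izIdx K L → Q j j k + Q j k j = 0 := by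
    intro j k hj
    have h := cub2 j k
    rw [beta1 j hj k, mul_zero, add_zero] at h
    have h2 : W j * (Q j j k + Q j k j) = 0 := by rw [mul_add]; linarith
    rcases mul_eq_zero.mp h2 with h' | h'
    · exact absurd h' (hWne j hj)
    · exact h'
  have delta : ∀ i b' c', b' ≠ izIdx K L → c' ≠ izIdx K L → b' ≠ c' →
      Q i b' c' + Q i c' b' = 0 := by
    intro i b' c' hb hc' hbc
    have hsum : ∑ j, (ϱ j * Q j b' c' + ϱ j * Q j c' b') = 0 := by
      rw [Finset.sum_add_distrib]; exact mcQo b' c'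
    have hnn : ∀ j ∈ Finset.univ, (0:ℝ) ≤ ϱ j * Q j b' c' + ϱ j * Q j c' b' := by
      intro j _
      rcases eq_or_ne j b' with rfl | hjb
      · have := gamma j c' hb
        nlinarith [hϱ j]
      rcases eq_or_ne j c' with rfl | hjc
      · have := gamma j b' hc'
        nlinarith [hϱ j]
      · have := hQ2 j b' c' hjb.symm hjc.symm hbc
        nlinarith [hϱ j]
    have h := (Finset.sum_eq_zero_iff_of_nonneg hnn).mp hsum i (Finset.mem_univ i)
    have hϱi := (hϱ i).ne'
    have : ϱ i * (Q i b' c' + Q i c' b') = 0 := by rw [mul_add]; linarith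
    rcases mul_eq_zero.mp this with h' | h'
    · exact absurd h' hϱi
    · exact h'
  -- general symmetric coefficient vanishing for non-z rows over non-z pairs
  have zf1 : ∀ i b' c', i ≠ izIdx K L → b' ≠ izIdx K L → c' ≠ izIdx K L →
      Q i b' c' + Q i c' b' = 0 := by
    intro i b' c' hi hb hc'
    rcases eq_or_ne b' c' with rfl | hbc
    · rw [betaall i b' hi]; ring
    · exact delta i b' c' hb hc' hbc
  have f2x : ∀ k k' : Fin K, Q (ixIdx K L k) (ixIdx K L k') (izIdx K L)
      + Q (ixIdx K L k) (izIdx K L) (ixIdx K L k') = 0 := by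
    intro k k'
    rcases eq_or_ne k' k with rfl | hkk
    · exact gamma _ _ (ix_ne_iz k')
    · have h := cub3 (ixIdx K L k) (ixIdx K L k') (izIdx K L)
      rw [hWx k, hWx k', hWz] at h
      simp only [zero_mul, add_zero] at h
      have hS1 := hQ2 (ixIdx K L k) (ixIdx K L k') (izIdx K L)
        (fun he => hkk (ix_inj he)) (ix_ne_iz k).symm (ix_ne_iz k')
      have hS2 := hQ2 (ixIdx K L k') (ixIdx K L k) (izIdx K L)
        (fun he => hkk (ix_inj he).symm) (ix_ne_iz k').symm (ix_ne_iz k)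
      have p1 : 0 ≤ 2 * a k * (Q (ixIdx K L k) (ixIdx K L k') (izIdx K L)
          + Q (ixIdx K L k) (izIdx K L) (ixIdx K L k')) :=
        mul_nonneg (by linarith [hapos k]) hS1
      have p2 : 0 ≤ 2 * a k' * (Q (ixIdx K L k') (ixIdx K L k) (izIdx K L)
          + Q (ixIdx K L k') (izIdx K L) (ixIdx K L k)) :=
        mul_nonneg (by linarith [hapos k']) hS2
      have q1 : 2 * a k * (Q (ixIdx K L k) (ixIdx K L k') (izIdx K L)
          + Q (ixIdx K L k) (izIdx K L) (ixIdx K L k')) = 0 := by linarith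
      rcases mul_eq_zero.mp q1 with h' | h'
      · have : (0:ℝ) < 2 * a k := by linarith [hapos k]
        exact absurd h' this.ne'
      · exact h'
  have f2y : ∀ l l' : Fin L, Q (iyIdx K L l) (iyIdx K L l') (izIdx K L)
      + Q (iyIdx K L l) (izIdx K L) (iyIdx K L l') = 0 := by
    intro l l'
    rcases eq_or_ne l' l with rfl | hll
    · exact gamma _ _ (iy_ne_iz l')
    · have h := cub3 (iyIdx K L l) (iyIdx K L l') (izIdx K L)
      rw [hWy l, hWy l', hWz] at h
      simp only [zero_mul, add_zero] at h
      have hS1 := hQ2 (iyIdx K L l) (iyIdx K L l') (izIdx K L)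
        (fun he => hll (iy_inj he)) (iy_ne_iz l).symm (iy_ne_iz l')
      have hS2 := hQ2 (iyIdx K L l') (iyIdx K L l) (izIdx K L)
        (fun he => hll (iy_inj he).symm) (iy_ne_iz l').symm (iy_ne_iz l)
      have p1 : 0 ≤ 2 * b l * (Q (iyIdx K L l) (iyIdx K L l') (izIdx K L)
          + Q (iyIdx K L l) (izIdx K L) (iyIdx K L l')) :=
        mul_nonneg (by linarith [hbpos l]) hS1
      have p2 : 0 ≤ 2 * b l' * (Q (iyIdx K L l') (iyIdx K L l) (izIdx K L)
          + Q (iyIdx K L l') (izIdx K L) (iyIdx K L l)) :=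
        mul_nonneg (by linarith [hbpos l']) hS2
      have q1 : 2 * b l * (Q (iyIdx K L l) (iyIdx K L l') (izIdx K L)
          + Q (iyIdx K L l) (izIdx K L) (iyIdx K L l')) = 0 := by linarith
      rcases mul_eq_zero.mp q1 with h' | h'
      · have : (0:ℝ) < 2 * b l := by linarith [hbpos l]
        exact absurd h' this.ne'
      · exact h'
  have hrel : ∀ (k : Fin K) (l : Fin L),
      a k * (Q (ixIdx K L k) (iyIdx K L l) (izIdx K L)
        + Q (ixIdx K L k) (izIdx K L) (iyIdx K L l))
      = b l * (Q (iyIdx K L l) (ixIdx K L k) (izIdx K L)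
        + Q (iyIdx K L l) (izIdx K L) (ixIdx K L k)) := by
    intro k l
    have h := cub3 (ixIdx K L k) (iyIdx K L l) (izIdx K L)
    rw [hWx k, hWy l, hWz] at h
    simp only [zero_mul, add_zero] at h
    linarith
  have Rzero : ∀ i j, i ≠ izIdx K L → R i j = 0 := by
    intro i j hi
    rcases eq_or_ne j (izIdx K L) with rfl | hj
    · have h := quadRo i (izIdx K L)
      rw [hWz, zero_mul, add_zero] at h
      rcases mul_eq_zero.mp h with h' | h'
      · exact absurd h' (hWne i hi)
      · exact h'
    · have hnn : ∀ i' ∈ Finset.univ, (0:ℝ) ≤ ϱ i' * R i' j := by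
        intro i' _
        rcases eq_or_ne i' j with rfl | hij
        · rcases mul_eq_zero.mp (quadRd i') with h' | h'
          · exact absurd h' (hWne i' hj)
          · rw [h']; simp
        · exact mul_nonneg (hϱ i').le (hR i' j hij.symm)
      have h := (Finset.sum_eq_zero_iff_of_nonneg hnn).mp (mcR j) i (Finset.mem_univ i)
      rcases mul_eq_zero.mp h with h' | h'
      · exact absurd h' (hϱ i).ne'
      · exact h'
  have czero : ∀ i, i ≠ izIdx K L → c i = 0 := by
    intro i hi
    rcases mul_eq_zero.mp (linc i) with h' | h'
    · exact absurd h' (hWne i hi)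
    · exact h'
  -- the matrix A
  set A : Fin K → Fin L → ℝ := fun k l =>
    (Q (ixIdx K L k) (iyIdx K L l) (izIdx K L)
      + Q (ixIdx K L k) (izIdx K L) (iyIdx K L l)) / b l with hAdef
  have hbA : ∀ (k : Fin K) (l : Fin L), b l * A k l
      = Q (ixIdx K L k) (iyIdx K L l) (izIdx K L)
        + Q (ixIdx K L k) (izIdx K L) (iyIdx K L l) := by
    intro k l
    simp only [hAdef]
    have hb := (hbpos l).ne'
    field_simp
  have haA : ∀ (k : Fin K) (l : Fin L), a k * A k l
      = Q (iyIdx K L l) (ixIdx K L k) (izIdx K L)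
        + Q (iyIdx K L l) (izIdx K L) (ixIdx K L k) := by
    intro k l
    simp only [hAdef]
    have hb := (hbpos l).ne'
    have h := hrel k l
    field_simp
    linarith
  refine ⟨A, ?_, ?_, ?_, ?_⟩
  · intro k l
    simp only [hAdef]
    exact div_nonneg (hQ2 _ _ _ (ix_ne_iy k l).symm (ix_ne_iz k).symm (iy_ne_iz l))
      (hbpos l).le
  · -- the x-rows
    intro x k
    have hi : ixIdx K L k ≠ izIdx K L := ix_ne_iz k
    rw [hP]
    have hr0 : ∑ j, R (ixIdx K L k) j * x j = 0 :=
      Finset.sum_eq_zero fun j _ => by rw [Rzero _ j hi, zero_mul]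
    rw [hr0, czero _ hi, add_zero, add_zero]
    have hswap : ∑ b', ∑ c', Q (ixIdx K L k) c' b' * x b' * x c'
        = ∑ b', ∑ c', Q (ixIdx K L k) b' c' * x b' * x c' := by
      rw [Finset.sum_comm]
      exact Finset.sum_congr rfl fun b' _ => Finset.sum_congr rfl fun c' _ => by ring
    have hdouble : ∑ b', ∑ c', (Q (ixIdx K L k) b' c' + Q (ixIdx K L k) c' b') * x b' * x c'
        = 2 * ∑ b', ∑ c', Q (ixIdx K L k) b' c' * x b' * x c' := by
      simp only [add_mul, Finset.sum_add_distrib]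
      rw [hswap]; ring
    have hsymsum : ∑ b', ∑ c', (Q (ixIdx K L k) b' c' + Q (ixIdx K L k) c' b') * x b' * x c'
        = 2 * ∑ l, (Q (ixIdx K L k) (iyIdx K L l) (izIdx K L)
            + Q (ixIdx K L k) (izIdx K L) (iyIdx K L l)) * x (iyIdx K L l) * x (izIdx K L) := by
      rw [sum_split (f := fun b' => ∑ c',
        (Q (ixIdx K L k) b' c' + Q (ixIdx K L k) c' b') * x b' * x c')]
      have Cx : ∑ k', ∑ c', (Q (ixIdx K L k) (ixIdx K L k') c'
          + Q (ixIdx K L k) c' (ixIdx K L k')) * x (ixIdx K L k') * x c' = 0 := by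
        refine Finset.sum_eq_zero fun k' _ => ?_
        rw [sum_split (f := fun c' => (Q (ixIdx K L k) (ixIdx K L k') c'
          + Q (ixIdx K L k) c' (ixIdx K L k')) * x (ixIdx K L k') * x c')]
        have c1 : ∑ k'', (Q (ixIdx K L k) (ixIdx K L k') (ixIdx K L k'')
            + Q (ixIdx K L k) (ixIdx K L k'') (ixIdx K L k')) * x (ixIdx K L k') * x (ixIdx K L k'') = 0 :=
          Finset.sum_eq_zero fun k'' _ => by
            rw [zf1 _ _ _ hi (ix_ne_iz k') (ix_ne_iz k''), zero_mul, zero_mul]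
        have c2 : ∑ l', (Q (ixIdx K L k) (ixIdx K L k') (iyIdx K L l')
            + Q (ixIdx K L k) (iyIdx K L l') (ixIdx K L k')) * x (ixIdx K L k') * x (iyIdx K L l') = 0 :=
          Finset.sum_eq_zero fun l' _ => by
            rw [zf1 _ _ _ hi (ix_ne_iz k') (iy_ne_iz l'), zero_mul, zero_mul]
        have c3 : (Q (ixIdx K L k) (ixIdx K L k') (izIdx K L)
            + Q (ixIdx K L k) (izIdx K L) (ixIdx K L k')) * x (ixIdx K L k') * x (izIdx K L) = 0 := by
          rw [f2x k k', zero_mul, zero_mul]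
        rw [c1, c2, c3]; ring
      have Cy : ∑ l', ∑ c', (Q (ixIdx K L k) (iyIdx K L l') c'
          + Q (ixIdx K L k) c' (iyIdx K L l')) * x (iyIdx K L l') * x c'
          = ∑ l', (Q (ixIdx K L k) (iyIdx K L l') (izIdx K L)
            + Q (ixIdx K L k) (izIdx K L) (iyIdx K L l')) * x (iyIdx K L l') * x (izIdx K L) := by
        refine Finset.sum_congr rfl fun l' _ => ?_
        rw [sum_split (f := fun c' => (Q (ixIdx K L k) (iyIdx K L l') c'
          + Q (ixIdx K L k) c' (iyIdx K L l')) * x (iyIdx K L l') * x c')]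
        have c1 : ∑ k'', (Q (ixIdx K L k) (iyIdx K L l') (ixIdx K L k'')
            + Q (ixIdx K L k) (ixIdx K L k'') (iyIdx K L l')) * x (iyIdx K L l') * x (ixIdx K L k'') = 0 :=
          Finset.sum_eq_zero fun k'' _ => by
            rw [zf1 _ _ _ hi (iy_ne_iz l') (ix_ne_iz k''), zero_mul, zero_mul]
        have c2 : ∑ l'', (Q (ixIdx K L k) (iyIdx K L l') (iyIdx K L l'')
            + Q (ixIdx K L k) (iyIdx K L l'') (iyIdx K L l')) * x (iyIdx K L l') * x (iyIdx K L l'') = 0 :=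
          Finset.sum_eq_zero fun l'' _ => by
            rw [zf1 _ _ _ hi (iy_ne_iz l') (iy_ne_iz l''), zero_mul, zero_mul]
        rw [c1, c2]; ring
      have Cz : ∑ c', (Q (ixIdx K L k) (izIdx K L) c'
          + Q (ixIdx K L k) c' (izIdx K L)) * x (izIdx K L) * x c'
          = ∑ l', (Q (ixIdx K L k) (iyIdx K L l') (izIdx K L)
            + Q (ixIdx K L k) (izIdx K L) (iyIdx K L l')) * x (iyIdx K L l') * x (izIdx K L) := by
        rw [sum_split (f := fun c' => (Q (ixIdx K L k) (izIdx K L) c'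
          + Q (ixIdx K L k) c' (izIdx K L)) * x (izIdx K L) * x c')]
        have c1 : ∑ k'', (Q (ixIdx K L k) (izIdx K L) (ixIdx K L k'')
            + Q (ixIdx K L k) (ixIdx K L k'') (izIdx K L)) * x (izIdx K L) * x (ixIdx K L k'') = 0 :=
          Finset.sum_eq_zero fun k'' _ => by
            have h := f2x k k''
            have h2 : Q (ixIdx K L k) (izIdx K L) (ixIdx K L k'')
                + Q (ixIdx K L k) (ixIdx K L k'') (izIdx K L) = 0 := by linarith
            rw [h2, zero_mul, zero_mul]
        have c3 : (Q (ixIdx K L k) (izIdx K L) (izIdx K L)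
            + Q (ixIdx K L k) (izIdx K L) (izIdx K L)) * x (izIdx K L) * x (izIdx K L) = 0 := by
          rw [beta2 _ hi]; ring
        rw [c1, c3, zero_add, add_zero]
        exact Finset.sum_congr rfl fun l' _ => by ring
      rw [Cx, Cy, Cz, zero_add]
      ring
    have final : ∑ b', ∑ c', Q (ixIdx K L k) b' c' * x b' * x c'
        = ∑ l, (Q (ixIdx K L k) (iyIdx K L l) (izIdx K L)
            + Q (ixIdx K L k) (izIdx K L) (iyIdx K L l)) * x (iyIdx K L l) * x (izIdx K L) := by
      linarith
    rw [final]
    refine Finset.sum_congr rfl fun l _ => ?_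
    rw [hbA k l]
  · -- the y-rows
    intro x l
    have hi : iyIdx K L l ≠ izIdx K L := iy_ne_iz l
    rw [hP]
    have hr0 : ∑ j, R (iyIdx K L l) j * x j = 0 :=
      Finset.sum_eq_zero fun j _ => by rw [Rzero _ j hi, zero_mul]
    rw [hr0, czero _ hi, add_zero, add_zero]
    have hswap : ∑ b', ∑ c', Q (iyIdx K L l) c' b' * x b' * x c'
        = ∑ b', ∑ c', Q (iyIdx K L l) b' c' * x b' * x c' := by
      rw [Finset.sum_comm]
      exact Finset.sum_congr rfl fun b' _ => Finset.sum_congr rfl fun c' _ => by ring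
    have hdouble : ∑ b', ∑ c', (Q (iyIdx K L l) b' c' + Q (iyIdx K L l) c' b') * x b' * x c'
        = 2 * ∑ b', ∑ c', Q (iyIdx K L l) b' c' * x b' * x c' := by
      simp only [add_mul, Finset.sum_add_distrib]
      rw [hswap]; ring
    have hsymsum : ∑ b', ∑ c', (Q (iyIdx K L l) b' c' + Q (iyIdx K L l) c' b') * x b' * x c'
        = 2 * ∑ k, (Q (iyIdx K L l) (ixIdx K L k) (izIdx K L)
            + Q (iyIdx K L l) (izIdx K L) (ixIdx K L k)) * x (ixIdx K L k) * x (izIdx K L) := by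
      rw [sum_split (f := fun b' => ∑ c',
        (Q (iyIdx K L l) b' c' + Q (iyIdx K L l) c' b') * x b' * x c')]
      have Cx : ∑ k', ∑ c', (Q (iyIdx K L l) (ixIdx K L k') c'
          + Q (iyIdx K L l) c' (ixIdx K L k')) * x (ixIdx K L k') * x c'
          = ∑ k', (Q (iyIdx K L l) (ixIdx K L k') (izIdx K L)
            + Q (iyIdx K L l) (izIdx K L) (ixIdx K L k')) * x (ixIdx K L k') * x (izIdx K L) := by
        refine Finset.sum_congr rfl fun k' _ => ?_
        rw [sum_split (f := fun c' => (Q (iyIdx K L l) (ixIdx K L k') c'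
          + Q (iyIdx K L l) c' (ixIdx K L k')) * x (ixIdx K L k') * x c')]
        have c1 : ∑ k'', (Q (iyIdx K L l) (ixIdx K L k') (ixIdx K L k'')
            + Q (iyIdx K L l) (ixIdx K L k'') (ixIdx K L k')) * x (ixIdx K L k') * x (ixIdx K L k'') = 0 :=
          Finset.sum_eq_zero fun k'' _ => by
            rw [zf1 _ _ _ hi (ix_ne_iz k') (ix_ne_iz k''), zero_mul, zero_mul]
        have c2 : ∑ l'', (Q (iyIdx K L l) (ixIdx K L k') (iyIdx K L l'')
            + Q (iyIdx K L l) (iyIdx K L l'') (ixIdx K L k')) * x (ixIdx K L k') * x (iyIdx K L l'') = 0 :=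
          Finset.sum_eq_zero fun l'' _ => by
            rw [zf1 _ _ _ hi (ix_ne_iz k') (iy_ne_iz l''), zero_mul, zero_mul]
        rw [c1, c2]; ring
      have Cy : ∑ l', ∑ c', (Q (iyIdx K L l) (iyIdx K L l') c'
          + Q (iyIdx K L l) c' (iyIdx K L l')) * x (iyIdx K L l') * x c' = 0 := by
        refine Finset.sum_eq_zero fun l' _ => ?_
        rw [sum_split (f := fun c' => (Q (iyIdx K L l) (iyIdx K L l') c'
          + Q (iyIdx K L l) c' (iyIdx K L l')) * x (iyIdx K L l') * x c')]
        have c1 : ∑ k'', (Q (iyIdx K L l) (iyIdx K L l') (ixIdx K L k'')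
            + Q (iyIdx K L l) (ixIdx K L k'') (iyIdx K L l')) * x (iyIdx K L l') * x (ixIdx K L k'') = 0 :=
          Finset.sum_eq_zero fun k'' _ => by
            rw [zf1 _ _ _ hi (iy_ne_iz l') (ix_ne_iz k''), zero_mul, zero_mul]
        have c2 : ∑ l'', (Q (iyIdx K L l) (iyIdx K L l') (iyIdx K L l'')
            + Q (iyIdx K L l) (iyIdx K L l'') (iyIdx K L l')) * x (iyIdx K L l') * x (iyIdx K L l'') = 0 :=
          Finset.sum_eq_zero fun l'' _ => by
            rw [zf1 _ _ _ hi (iy_ne_iz l') (iy_ne_iz l''), zero_mul, zero_mul]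
        have c3 : (Q (iyIdx K L l) (iyIdx K L l') (izIdx K L)
            + Q (iyIdx K L l) (izIdx K L) (iyIdx K L l')) * x (iyIdx K L l') * x (izIdx K L) = 0 := by
          rw [f2y l l', zero_mul, zero_mul]
        rw [c1, c2, c3]; ring
      have Cz : ∑ c', (Q (iyIdx K L l) (izIdx K L) c'
          + Q (iyIdx K L l) c' (izIdx K L)) * x (izIdx K L) * x c'
          = ∑ k', (Q (iyIdx K L l) (ixIdx K L k') (izIdx K L)
            + Q (iyIdx K L l) (izIdx K L) (ixIdx K L k')) * x (ixIdx K L k') * x (izIdx K L) := by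
        rw [sum_split (f := fun c' => (Q (iyIdx K L l) (izIdx K L) c'
          + Q (iyIdx K L l) c' (izIdx K L)) * x (izIdx K L) * x c')]
        have c2 : ∑ l'', (Q (iyIdx K L l) (izIdx K L) (iyIdx K L l'')
            + Q (iyIdx K L l) (iyIdx K L l'') (izIdx K L)) * x (izIdx K L) * x (iyIdx K L l'') = 0 :=
          Finset.sum_eq_zero fun l'' _ => by
            have h := f2y l l''
            have h2 : Q (iyIdx K L l) (izIdx K L) (iyIdx K L l'')
                + Q (iyIdx K L l) (iyIdx K L l'') (izIdx K L) = 0 := by linarith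
            rw [h2, zero_mul, zero_mul]
        have c3 : (Q (iyIdx K L l) (izIdx K L) (izIdx K L)
            + Q (iyIdx K L l) (izIdx K L) (izIdx K L)) * x (izIdx K L) * x (izIdx K L) = 0 := by
          rw [beta2 _ hi]; ring
        rw [c2, c3, add_zero, add_zero]
        exact Finset.sum_congr rfl fun k' _ => by ring
      rw [Cx, Cy, Cz, add_zero]
      ring
    have final : ∑ b', ∑ c', Q (iyIdx K L l) b' c' * x b' * x c'
        = ∑ k, (Q (iyIdx K L l) (ixIdx K L k) (izIdx K L)
            + Q (iyIdx K L l) (izIdx K L) (ixIdx K L k)) * x (ixIdx K L k) * x (izIdx K L) := by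
      linarith
    rw [final]
    refine Finset.sum_congr rfl fun k _ => ?_
    rw [haA k l]
  · -- the z-row
    intro x
    have h := hmc x
    rw [sum_split (f := fun i => ϱ i * P i x)] at h
    have hz := (hϱ (izIdx K L)).ne'
    field_simp
    linarith
end

section
/- In the setting of the previous theorem with L = 0 (no y-variables): if a quadratic kinetic, kinetically mass conserving system x_k' = X_k, z' = Z on ℝ^{K+1} has V = Σ_k a_k x_k^2 (all a_k > 0) as a first integral, then X_k = 0 for all k and Z = 0. -/
open Finset

private lemma sum_one'' {n : ℕ} (j : Fin n) (f : Fin n → ℝ)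
    (h : ∀ m, m ≠ j → f m = 0) : ∑ m, f m = f j :=
  Finset.sum_eq_single j (fun b _ hb => h b hb) (fun hj => absurd (Finset.mem_univ j) hj)

private lemma sum_two'' {n : ℕ} {j k : Fin n} (hjk : j ≠ k) (f : Fin n → ℝ)
    (h : ∀ m, m ≠ j → m ≠ k → f m = 0) : ∑ m, f m = f j + f k := by
  have h1 : ∑ m ∈ ({j, k} : Finset (Fin n)), f m = ∑ m, f m :=
    Finset.sum_subset (Finset.subset_univ _) (by
      intro m _ hm
      simp only [Finset.mem_insert, Finset.mem_singleton, not_or] at hm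
      exact h m hm.1 hm.2)
  rw [← h1, Finset.sum_pair hjk]

private lemma sum_three'' {n : ℕ} {j k l : Fin n} (hjk : j ≠ k) (hjl : j ≠ l) (hkl : k ≠ l)
    (f : Fin n → ℝ) (h : ∀ m, m ≠ j → m ≠ k → m ≠ l → f m = 0) :
    ∑ m, f m = f j + f k + f l := by
  have h1 : ∑ m ∈ ({j, k, l} : Finset (Fin n)), f m = ∑ m, f m :=
    Finset.sum_subset (Finset.subset_univ _) (by
      intro m _ hm
      simp only [Finset.mem_insert, Finset.mem_singleton, not_or] at hm
      exact h m hm.1 hm.2.1 hm.2.2)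
  rw [← h1, Finset.sum_insert (by simp [hjk, hjl]), Finset.sum_pair hkl, add_assoc]

private lemma quad_zero' {A B C : ℝ} (h : ∀ s : ℝ, A * s ^ 2 + B * s + C = 0) :
    A = 0 ∧ B = 0 ∧ C = 0 :=
  ⟨by linear_combination (h 1 + h (-1)) / 2 - h 0,
   by linear_combination (h 1 - h (-1)) / 2,
   by linear_combination h 0⟩

private lemma cubic_zero' {A B C D : ℝ} (h : ∀ t : ℝ, A * t ^ 3 + B * t ^ 2 + C * t + D = 0) :
    A = 0 ∧ B = 0 ∧ C = 0 ∧ D = 0 :=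
  ⟨by linear_combination (h 2 - h (-2) - 2 * h 1 + 2 * h (-1)) / 12,
   by linear_combination (h 1 + h (-1)) / 2 - h 0,
   by linear_combination (8 * h 1 - 8 * h (-1) - h 2 + h (-2)) / 12,
   by linear_combination h 0⟩

private lemma cancel_pos' {a x : ℝ} (ha : 0 < a) (h : a * x = 0) : x = 0 := by
  rcases mul_eq_zero.mp h with h' | h'
  · exact absurd h' ha.ne'
  · exact h'

private def tv1 {n : ℕ} (j : Fin n) (t : ℝ) : Fin n → ℝ := fun m => if m = j then t else 0
private def tv2 {n : ℕ} (j k : Fin n) (t s : ℝ) : Fin n → ℝ :=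
  fun m => if m = j then t else if m = k then s else 0
private def tv3 {n : ℕ} (j k l : Fin n) (t s u : ℝ) : Fin n → ℝ :=
  fun m => if m = j then t else if m = k then s else if m = l then u else 0

private lemma tv1_same {n : ℕ} (j : Fin n) (t : ℝ) : tv1 j t j = t := by simp [tv1]
private lemma tv1_other {n : ℕ} {j m : Fin n} (h : m ≠ j) (t : ℝ) : tv1 j t m = 0 := by
  simp [tv1, h]

private lemma tv2_fst {n : ℕ} (j k : Fin n) (t s : ℝ) : tv2 j k t s j = t := by simp [tv2]
private lemma tv2_snd {n : ℕ} {j k : Fin n} (hjk : j ≠ k) (t s : ℝ) : tv2 j k t s k = s := by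
  simp [tv2, hjk.symm]
private lemma tv2_other {n : ℕ} {j k m : Fin n} (h1 : m ≠ j) (h2 : m ≠ k) (t s : ℝ) :
    tv2 j k t s m = 0 := by simp [tv2, h1, h2]

private lemma tv3_fst {n : ℕ} (j k l : Fin n) (t s u : ℝ) : tv3 j k l t s u j = t := by simp [tv3]
private lemma tv3_snd {n : ℕ} {j k : Fin n} (l : Fin n) (hjk : j ≠ k) (t s u : ℝ) :
    tv3 j k l t s u k = s := by simp [tv3, hjk.symm]
private lemma tv3_thd {n : ℕ} {j k l : Fin n} (hjl : j ≠ l) (hkl : k ≠ l) (t s u : ℝ) :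
    tv3 j k l t s u l = u := by simp [tv3, hjl.symm, hkl.symm]
private lemma tv3_other {n : ℕ} {j k l m : Fin n} (h1 : m ≠ j) (h2 : m ≠ k) (h3 : m ≠ l)
    (t s u : ℝ) : tv3 j k l t s u m = 0 := by simp [tv3, h1, h2, h3]

private lemma tv2_eq {n : ℕ} {j k : Fin n} (hjk : j ≠ k) (t s : ℝ) (m : Fin n) :
    tv2 j k t s m = tv1 j t m + tv1 k s m := by
  simp only [tv1, tv2]
  rcases eq_or_ne m j with rfl | h1
  · simp [hjk]
  · rcases eq_or_ne m k with rfl | h2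
    · simp [h1]
    · simp [h1, h2]

private lemma tv3_eq {n : ℕ} {j k l : Fin n} (hjk : j ≠ k) (hjl : j ≠ l) (hkl : k ≠ l)
    (t s u : ℝ) (m : Fin n) : tv3 j k l t s u m = tv1 j t m + tv1 k s m + tv1 l u m := by
  simp only [tv1, tv3]
  rcases eq_or_ne m j with rfl | h1
  · simp [hjk, hjl]
  · rcases eq_or_ne m k with rfl | h2
    · simp [h1, hkl]
    · rcases eq_or_ne m l with rfl | h3
      · simp [h1, h2]
      · simp [h1, h2, h3]

private lemma sumQ11 {n : ℕ} (j j' : Fin n) (Qi : Fin n → Fin n → ℝ) (t t' : ℝ) :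
    ∑ m, ∑ l, Qi m l * tv1 j t m * tv1 j' t' l = Qi j j' * t * t' := by
  rw [sum_one'' j (fun m => ∑ l, Qi m l * tv1 j t m * tv1 j' t' l)
      (fun m hm => Finset.sum_eq_zero fun l _ => by simp [tv1_other hm])]
  rw [sum_one'' j' (fun l => Qi j l * tv1 j t j * tv1 j' t' l)
      (fun l hl => by simp [tv1_other hl])]
  rw [tv1_same, tv1_same]

private lemma sumR1 {n : ℕ} (j : Fin n) (Rr : Fin n → ℝ) (t : ℝ) :
    ∑ m, Rr m * tv1 j t m = Rr j * t := by
  rw [sum_one'' j (fun m => Rr m * tv1 j t m) (fun m hm => by simp [tv1_other hm])]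
  rw [tv1_same]

private lemma sumQ22 {n : ℕ} {j k : Fin n} (hjk : j ≠ k) (Qi : Fin n → Fin n → ℝ) (t s : ℝ) :
    ∑ m, ∑ l, Qi m l * tv2 j k t s m * tv2 j k t s l
      = Qi j j * t * t + Qi j k * t * s + Qi k j * s * t + Qi k k * s * s := by
  have h1 : ∀ m l : Fin n, Qi m l * tv2 j k t s m * tv2 j k t s l
      = Qi m l * tv1 j t m * tv1 j t l + Qi m l * tv1 j t m * tv1 k s l
        + Qi m l * tv1 k s m * tv1 j t l + Qi m l * tv1 k s m * tv1 k s l := by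
    intro m l; rw [tv2_eq hjk, tv2_eq hjk]; ring
  simp only [h1, Finset.sum_add_distrib, sumQ11]

private lemma sumR2 {n : ℕ} {j k : Fin n} (hjk : j ≠ k) (Rr : Fin n → ℝ) (t s : ℝ) :
    ∑ m, Rr m * tv2 j k t s m = Rr j * t + Rr k * s := by
  have h1 : ∀ m : Fin n, Rr m * tv2 j k t s m = Rr m * tv1 j t m + Rr m * tv1 k s m := by
    intro m; rw [tv2_eq hjk]; ring
  simp only [h1, Finset.sum_add_distrib, sumR1]

private lemma sumQ33 {n : ℕ} {j k l : Fin n} (hjk : j ≠ k) (hjl : j ≠ l) (hkl : k ≠ l)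
    (Qi : Fin n → Fin n → ℝ) (t s u : ℝ) :
    ∑ m, ∑ m', Qi m m' * tv3 j k l t s u m * tv3 j k l t s u m'
      = Qi j j * t * t + Qi j k * t * s + Qi j l * t * u
        + Qi k j * s * t + Qi k k * s * s + Qi k l * s * u
        + Qi l j * u * t + Qi l k * u * s + Qi l l * u * u := by
  have h1 : ∀ m m' : Fin n, Qi m m' * tv3 j k l t s u m * tv3 j k l t s u m'
      = Qi m m' * tv1 j t m * tv1 j t m' + Qi m m' * tv1 j t m * tv1 k s m'
        + Qi m m' * tv1 j t m * tv1 l u m'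
        + Qi m m' * tv1 k s m * tv1 j t m' + Qi m m' * tv1 k s m * tv1 k s m'
        + Qi m m' * tv1 k s m * tv1 l u m'
        + Qi m m' * tv1 l u m * tv1 j t m' + Qi m m' * tv1 l u m * tv1 k s m'
        + Qi m m' * tv1 l u m * tv1 l u m' := by
    intro m m'; rw [tv3_eq hjk hjl hkl, tv3_eq hjk hjl hkl]; ring
  simp only [h1, Finset.sum_add_distrib, sumQ11]

private lemma sumR3 {n : ℕ} {j k l : Fin n} (hjk : j ≠ k) (hjl : j ≠ l) (hkl : k ≠ l)
    (Rr : Fin n → ℝ) (t s u : ℝ) :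
    ∑ m, Rr m * tv3 j k l t s u m = Rr j * t + Rr k * s + Rr l * u := by
  have h1 : ∀ m : Fin n, Rr m * tv3 j k l t s u m
      = Rr m * tv1 j t m + Rr m * tv1 k s m + Rr m * tv1 l u m := by
    intro m; rw [tv3_eq hjk hjl hkl]; ring
  simp only [h1, Finset.sum_add_distrib, sumR1]

/-- Embedding of an `x`-index into the combined index set of `x_1,…,x_K, z`. -/
def ixIdx' (K : ℕ) (k : Fin K) : Fin (K + 1) := ⟨k.1, by have := k.2; omega⟩

/-- The index of the variable `z`. -/
def izIdx' (K : ℕ) : Fin (K + 1) := ⟨K, by omega⟩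

open Finset in
/-- The case `L = 0`: a kinetic, kinetically mass conserving quadratic system
`x_k' = X_k, z' = Z` on `ℝ^(K+1)` with first integral `V = Σ a_k x_k²`
(all `a_k > 0`) satisfies `X_k = 0` for all `k` and `Z = 0`. -/
theorem stmt_17 (K : ℕ) (hK : 1 ≤ K)
    (Q : Fin (K + 1) → Fin (K + 1) → Fin (K + 1) → ℝ)
    (R : Fin (K + 1) → Fin (K + 1) → ℝ)
    (c : Fin (K + 1) → ℝ)
    (P : Fin (K + 1) → (Fin (K + 1) → ℝ) → ℝ)
    -- P is a quadratic polynomial system: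
    (hP : ∀ i x, P i x =
      (∑ j, ∑ k, Q i j k * x j * x k) + (∑ j, R i j * x j) + c i)
    -- the system is kinetic:
    (hQ1 : ∀ i j, j ≠ i → 0 ≤ Q i j j)
    (hQ2 : ∀ i j k, j ≠ i → k ≠ i → j ≠ k → 0 ≤ Q i j k + Q i k j)
    (hR : ∀ i j, j ≠ i → 0 ≤ R i j)
    (hc : ∀ i, 0 ≤ c i)
    -- kinetically mass conserving with positive weights:
    (ϱ : Fin (K + 1) → ℝ) (hϱ : ∀ i, 0 < ϱ i)
    (hmc : ∀ x : Fin (K + 1) → ℝ, ∑ i, ϱ i * P i x = 0)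
    -- V = Σ a_k x_k² is a first integral:
    (a : Fin K → ℝ) (hapos : ∀ k, 0 < a k)
    (hfi : ∀ x : Fin (K + 1) → ℝ,
      ∑ k, 2 * a k * x (ixIdx' K k) * P (ixIdx' K k) x = 0) :
    ∀ i x, P i x = 0 := by
  -- index facts
  have hne : ∀ k : Fin K, ixIdx' K k ≠ izIdx' K := by
    intro k h
    have hh : (k : ℕ) = K := congrArg Fin.val h
    exact absurd hh (Nat.ne_of_lt k.2)
  have hinj : ∀ {k k' : Fin K}, ixIdx' K k = ixIdx' K k' → k = k' := by
    intro k k' h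
    have hh := congrArg Fin.val h
    simp only [ixIdx'] at hh
    exact Fin.ext hh
  have hcase : ∀ i : Fin (K + 1), i = izIdx' K ∨ ∃ k : Fin K, i = ixIdx' K k := by
    intro i
    rcases eq_or_ne (i : ℕ) K with h | h
    · exact Or.inl (Fin.ext h)
    · exact Or.inr ⟨⟨(i : ℕ), by have := i.2; omega⟩, Fin.ext rfl⟩
  -- evaluation of P at test points
  have evalP1 : ∀ (j i : Fin (K + 1)) (t : ℝ),
      P i (tv1 j t) = Q i j j * t ^ 2 + R i j * t + c i := by
    intro j i t
    rw [hP, sumQ11, sumR1]; ring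
  have evalP2 : ∀ (j k : Fin (K + 1)), j ≠ k → ∀ (i : Fin (K + 1)) (t s : ℝ),
      P i (tv2 j k t s)
        = Q i j j * t ^ 2 + (Q i j k + Q i k j) * (t * s) + Q i k k * s ^ 2
          + R i j * t + R i k * s + c i := by
    intro j k hjk i t s
    rw [hP, sumQ22 hjk, sumR2 hjk]; ring
  have evalP3 : ∀ (j k l : Fin (K + 1)), j ≠ k → j ≠ l → k ≠ l →
      ∀ (i : Fin (K + 1)) (t s u : ℝ),
      P i (tv3 j k l t s u)
        = Q i j j * t ^ 2 + (Q i j k + Q i k j) * (t * s) + (Q i j l + Q i l j) * (t * u)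
          + Q i k k * s ^ 2 + (Q i k l + Q i l k) * (s * u) + Q i l l * u ^ 2
          + R i j * t + R i k * s + R i l * u + c i := by
    intro j k l hjk hjl hkl i t s u
    rw [hP, sumQ33 hjk hjl hkl, sumR3 hjk hjl hkl]; ring
  -- reductions of hfi at test points
  have hfiA : ∀ (j0 : Fin K) (t : ℝ),
      2 * a j0 * t * P (ixIdx' K j0) (tv1 (ixIdx' K j0) t) = 0 := by
    intro j0 t
    have h := hfi (tv1 (ixIdx' K j0) t)
    rw [sum_one'' j0 (fun m => 2 * a m * tv1 (ixIdx' K j0) t (ixIdx' K m)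
        * P (ixIdx' K m) (tv1 (ixIdx' K j0) t))
        (fun m hm => by
          have e1 : ixIdx' K m ≠ ixIdx' K j0 := fun hh => hm (hinj hh)
          simp [tv1_other e1])] at h
    rw [tv1_same] at h
    exact h
  have hfiB : ∀ (j0 : Fin K) (t s : ℝ),
      2 * a j0 * t * P (ixIdx' K j0) (tv2 (ixIdx' K j0) (izIdx' K) t s) = 0 := by
    intro j0 t s
    have h := hfi (tv2 (ixIdx' K j0) (izIdx' K) t s)
    rw [sum_one'' j0 (fun m => 2 * a m * tv2 (ixIdx' K j0) (izIdx' K) t s (ixIdx' K m)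
        * P (ixIdx' K m) (tv2 (ixIdx' K j0) (izIdx' K) t s))
        (fun m hm => by
          have e1 : ixIdx' K m ≠ ixIdx' K j0 := fun hh => hm (hinj hh)
          simp [tv2_other e1 (hne m)])] at h
    rw [tv2_fst] at h
    exact h
  have hfiC : ∀ (j0 k0 : Fin K), j0 ≠ k0 → ∀ (t s : ℝ),
      2 * a j0 * t * P (ixIdx' K j0) (tv2 (ixIdx' K j0) (ixIdx' K k0) t s)
      + 2 * a k0 * s * P (ixIdx' K k0) (tv2 (ixIdx' K j0) (ixIdx' K k0) t s) = 0 := by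
    intro j0 k0 h0 t s
    have hjk : ixIdx' K j0 ≠ ixIdx' K k0 := fun hh => h0 (hinj hh)
    have h := hfi (tv2 (ixIdx' K j0) (ixIdx' K k0) t s)
    rw [sum_two'' h0 (fun m => 2 * a m * tv2 (ixIdx' K j0) (ixIdx' K k0) t s (ixIdx' K m)
        * P (ixIdx' K m) (tv2 (ixIdx' K j0) (ixIdx' K k0) t s))
        (fun m h1 h2 => by
          have e1 : ixIdx' K m ≠ ixIdx' K j0 := fun hh => h1 (hinj hh)
          have e2 : ixIdx' K m ≠ ixIdx' K k0 := fun hh => h2 (hinj hh)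
          simp [tv2_other e1 e2])] at h
    rw [tv2_fst, tv2_snd hjk] at h
    exact h
  have hfiD : ∀ (j0 k0 l0 : Fin K), j0 ≠ k0 → j0 ≠ l0 → k0 ≠ l0 → ∀ (t s u : ℝ),
      2 * a j0 * t * P (ixIdx' K j0) (tv3 (ixIdx' K j0) (ixIdx' K k0) (ixIdx' K l0) t s u)
      + 2 * a k0 * s * P (ixIdx' K k0) (tv3 (ixIdx' K j0) (ixIdx' K k0) (ixIdx' K l0) t s u)
      + 2 * a l0 * u * P (ixIdx' K l0) (tv3 (ixIdx' K j0) (ixIdx' K k0) (ixIdx' K l0) t s u)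
        = 0 := by
    intro j0 k0 l0 h1 h2 h3 t s u
    have hjk : ixIdx' K j0 ≠ ixIdx' K k0 := fun hh => h1 (hinj hh)
    have hjl : ixIdx' K j0 ≠ ixIdx' K l0 := fun hh => h2 (hinj hh)
    have hkl : ixIdx' K k0 ≠ ixIdx' K l0 := fun hh => h3 (hinj hh)
    have h := hfi (tv3 (ixIdx' K j0) (ixIdx' K k0) (ixIdx' K l0) t s u)
    rw [sum_three'' h1 h2 h3
        (fun m => 2 * a m * tv3 (ixIdx' K j0) (ixIdx' K k0) (ixIdx' K l0) t s u (ixIdx' K m)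
        * P (ixIdx' K m) (tv3 (ixIdx' K j0) (ixIdx' K k0) (ixIdx' K l0) t s u))
        (fun m e1 e2 e3 => by
          have f1 : ixIdx' K m ≠ ixIdx' K j0 := fun hh => e1 (hinj hh)
          have f2 : ixIdx' K m ≠ ixIdx' K k0 := fun hh => e2 (hinj hh)
          have f3 : ixIdx' K m ≠ ixIdx' K l0 := fun hh => e3 (hinj hh)
          simp [tv3_other f1 f2 f3])] at h
    rw [tv3_fst, tv3_snd _ hjk, tv3_thd hjl hkl] at h
    exact h
  have hfiE : ∀ (j0 k0 : Fin K), j0 ≠ k0 → ∀ (t s u : ℝ),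
      2 * a j0 * t * P (ixIdx' K j0) (tv3 (ixIdx' K j0) (ixIdx' K k0) (izIdx' K) t s u)
      + 2 * a k0 * s * P (ixIdx' K k0) (tv3 (ixIdx' K j0) (ixIdx' K k0) (izIdx' K) t s u)
        = 0 := by
    intro j0 k0 h0 t s u
    have hjk : ixIdx' K j0 ≠ ixIdx' K k0 := fun hh => h0 (hinj hh)
    have h := hfi (tv3 (ixIdx' K j0) (ixIdx' K k0) (izIdx' K) t s u)
    rw [sum_two'' h0 (fun m => 2 * a m * tv3 (ixIdx' K j0) (ixIdx' K k0) (izIdx' K) t s u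
          (ixIdx' K m)
        * P (ixIdx' K m) (tv3 (ixIdx' K j0) (ixIdx' K k0) (izIdx' K) t s u))
        (fun m e1 e2 => by
          have f1 : ixIdx' K m ≠ ixIdx' K j0 := fun hh => e1 (hinj hh)
          have f2 : ixIdx' K m ≠ ixIdx' K k0 := fun hh => e2 (hinj hh)
          simp [tv3_other f1 f2 (hne m)])] at h
    rw [tv3_fst, tv3_snd _ hjk] at h
    exact h
  -- mass conservation coefficients
  have hmcA : ∀ j : Fin (K + 1),
      (∑ i, ϱ i * Q i j j) = 0 ∧ (∑ i, ϱ i * R i j) = 0 ∧ (∑ i, ϱ i * c i) = 0 := by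
    intro j
    apply quad_zero'
    intro t
    have h := hmc (tv1 j t)
    have hrw : ∑ i, ϱ i * P i (tv1 j t)
        = ∑ i, (ϱ i * Q i j j * t ^ 2 + ϱ i * R i j * t + ϱ i * c i) :=
      Finset.sum_congr rfl fun i _ => by rw [evalP1 j i t]; ring
    rw [hrw] at h
    simp only [Finset.sum_add_distrib] at h
    rw [← Finset.sum_mul, ← Finset.sum_mul] at h
    exact h
  -- constants vanish
  have hc0 : ∀ i, c i = 0 := by
    intro i
    have hnn : ∀ m ∈ (univ : Finset (Fin (K + 1))), 0 ≤ ϱ m * c m :=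
      fun m _ => mul_nonneg (hϱ m).le (hc m)
    exact cancel_pos' (hϱ i)
      ((Finset.sum_eq_zero_iff_of_nonneg hnn).mp (hmcA (izIdx' K)).2.2 i (mem_univ i))
  -- diagonal coefficients of x-equations
  have hdiag : ∀ j0 : Fin K,
      Q (ixIdx' K j0) (ixIdx' K j0) (ixIdx' K j0) = 0
        ∧ R (ixIdx' K j0) (ixIdx' K j0) = 0 := by
    intro j0
    have h3 := cubic_zero' (A := 2 * a j0 * Q (ixIdx' K j0) (ixIdx' K j0) (ixIdx' K j0))
        (B := 2 * a j0 * R (ixIdx' K j0) (ixIdx' K j0))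
        (C := 2 * a j0 * c (ixIdx' K j0)) (D := 0)
        (fun t => by
          have h := hfiA j0 t
          rw [evalP1] at h
          linear_combination h)
    have ha : (0 : ℝ) < 2 * a j0 := by linarith [hapos j0]
    exact ⟨cancel_pos' ha h3.1, cancel_pos' ha h3.2.1⟩
  have hQcol : ∀ (i : Fin (K + 1)) (j0 : Fin K), Q i (ixIdx' K j0) (ixIdx' K j0) = 0 := by
    intro i j0
    have hnn : ∀ m ∈ (univ : Finset (Fin (K + 1))), 0 ≤ ϱ m * Q m (ixIdx' K j0) (ixIdx' K j0) := by
      intro m _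
      rcases eq_or_ne m (ixIdx' K j0) with rfl | hm
      · rw [(hdiag j0).1, mul_zero]
      · exact mul_nonneg (hϱ m).le (hQ1 m _ hm.symm)
    exact cancel_pos' (hϱ i)
      ((Finset.sum_eq_zero_iff_of_nonneg hnn).mp (hmcA (ixIdx' K j0)).1 i (mem_univ i))
  have hRcol : ∀ (i : Fin (K + 1)) (j0 : Fin K), R i (ixIdx' K j0) = 0 := by
    intro i j0
    have hnn : ∀ m ∈ (univ : Finset (Fin (K + 1))), 0 ≤ ϱ m * R m (ixIdx' K j0) := by
      intro m _
      rcases eq_or_ne m (ixIdx' K j0) with rfl | hm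
      · rw [(hdiag j0).2, mul_zero]
      · exact mul_nonneg (hϱ m).le (hR m _ hm.symm)
    exact cancel_pos' (hϱ i)
      ((Finset.sum_eq_zero_iff_of_nonneg hnn).mp (hmcA (ixIdx' K j0)).2.1 i (mem_univ i))
  -- step 3: coefficients involving z in x-equations
  have hstep3 : ∀ j0 : Fin K,
      (Q (ixIdx' K j0) (ixIdx' K j0) (izIdx' K) + Q (ixIdx' K j0) (izIdx' K) (ixIdx' K j0) = 0)
      ∧ Q (ixIdx' K j0) (izIdx' K) (izIdx' K) = 0 ∧ R (ixIdx' K j0) (izIdx' K) = 0 := by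
    intro j0
    have hjz := hne j0
    have hexp : ∀ t s : ℝ,
        2 * a j0 * t * (Q (ixIdx' K j0) (ixIdx' K j0) (ixIdx' K j0) * t ^ 2
          + (Q (ixIdx' K j0) (ixIdx' K j0) (izIdx' K)
              + Q (ixIdx' K j0) (izIdx' K) (ixIdx' K j0)) * (t * s)
          + Q (ixIdx' K j0) (izIdx' K) (izIdx' K) * s ^ 2
          + R (ixIdx' K j0) (ixIdx' K j0) * t + R (ixIdx' K j0) (izIdx' K) * s
          + c (ixIdx' K j0)) = 0 := by
      intro t s
      have h := hfiB j0 t s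
      rw [evalP2 _ _ hjz] at h
      exact h
    have ha2 : (0 : ℝ) < 2 * a j0 := by linarith [hapos j0]
    have ha4 : (0 : ℝ) < 4 * a j0 := by linarith [hapos j0]
    have q1 := quad_zero'
        (A := 2 * a j0 * Q (ixIdx' K j0) (izIdx' K) (izIdx' K))
        (B := 2 * a j0 * (Q (ixIdx' K j0) (ixIdx' K j0) (izIdx' K)
          + Q (ixIdx' K j0) (izIdx' K) (ixIdx' K j0) + R (ixIdx' K j0) (izIdx' K)))
        (C := 2 * a j0 * (Q (ixIdx' K j0) (ixIdx' K j0) (ixIdx' K j0)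
          + R (ixIdx' K j0) (ixIdx' K j0) + c (ixIdx' K j0)))
        (fun s => by linear_combination hexp 1 s)
    have q2 := quad_zero'
        (A := 4 * a j0 * Q (ixIdx' K j0) (izIdx' K) (izIdx' K))
        (B := 4 * a j0 * (2 * (Q (ixIdx' K j0) (ixIdx' K j0) (izIdx' K)
          + Q (ixIdx' K j0) (izIdx' K) (ixIdx' K j0)) + R (ixIdx' K j0) (izIdx' K)))
        (C := 4 * a j0 * (4 * Q (ixIdx' K j0) (ixIdx' K j0) (ixIdx' K j0)
          + 2 * R (ixIdx' K j0) (ixIdx' K j0) + c (ixIdx' K j0)))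
        (fun s => by linear_combination hexp 2 s)
    have hA := cancel_pos' ha2 q1.1
    have hB1 := cancel_pos' ha2 q1.2.1
    have hB2 := cancel_pos' ha4 q2.2.1
    exact ⟨by linarith, hA, by linarith⟩
  -- step 4: mixed x-x coefficients with own index
  have hSx : ∀ j0 k0 : Fin K, j0 ≠ k0 →
      Q (ixIdx' K j0) (ixIdx' K j0) (ixIdx' K k0)
        + Q (ixIdx' K j0) (ixIdx' K k0) (ixIdx' K j0) = 0 := by
    intro j0 k0 h0
    have hjk : ixIdx' K j0 ≠ ixIdx' K k0 := fun hh => h0 (hinj hh)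
    have hexp : ∀ t s : ℝ,
        2 * a j0 * t * (Q (ixIdx' K j0) (ixIdx' K j0) (ixIdx' K j0) * t ^ 2
          + (Q (ixIdx' K j0) (ixIdx' K j0) (ixIdx' K k0)
              + Q (ixIdx' K j0) (ixIdx' K k0) (ixIdx' K j0)) * (t * s)
          + Q (ixIdx' K j0) (ixIdx' K k0) (ixIdx' K k0) * s ^ 2
          + R (ixIdx' K j0) (ixIdx' K j0) * t + R (ixIdx' K j0) (ixIdx' K k0) * s
          + c (ixIdx' K j0))
        + 2 * a k0 * s * (Q (ixIdx' K k0) (ixIdx' K j0) (ixIdx' K j0) * t ^ 2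
          + (Q (ixIdx' K k0) (ixIdx' K j0) (ixIdx' K k0)
              + Q (ixIdx' K k0) (ixIdx' K k0) (ixIdx' K j0)) * (t * s)
          + Q (ixIdx' K k0) (ixIdx' K k0) (ixIdx' K k0) * s ^ 2
          + R (ixIdx' K k0) (ixIdx' K j0) * t + R (ixIdx' K k0) (ixIdx' K k0) * s
          + c (ixIdx' K k0)) = 0 := by
      intro t s
      have h := hfiC j0 k0 h0 t s
      rw [evalP2 _ _ hjk, evalP2 _ _ hjk] at h
      exact h
    have q := cubic_zero'
        (A := 2 * a k0 * Q (ixIdx' K k0) (ixIdx' K k0) (ixIdx' K k0))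
        (B := 2 * a j0 * Q (ixIdx' K j0) (ixIdx' K k0) (ixIdx' K k0)
          + 2 * a k0 * (Q (ixIdx' K k0) (ixIdx' K j0) (ixIdx' K k0)
            + Q (ixIdx' K k0) (ixIdx' K k0) (ixIdx' K j0) + R (ixIdx' K k0) (ixIdx' K k0)))
        (C := 2 * a j0 * (Q (ixIdx' K j0) (ixIdx' K j0) (ixIdx' K k0)
            + Q (ixIdx' K j0) (ixIdx' K k0) (ixIdx' K j0) + R (ixIdx' K j0) (ixIdx' K k0))
          + 2 * a k0 * (Q (ixIdx' K k0) (ixIdx' K j0) (ixIdx' K j0)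
            + R (ixIdx' K k0) (ixIdx' K j0) + c (ixIdx' K k0)))
        (D := 2 * a j0 * (Q (ixIdx' K j0) (ixIdx' K j0) (ixIdx' K j0)
          + R (ixIdx' K j0) (ixIdx' K j0) + c (ixIdx' K j0)))
        (fun s => by linear_combination hexp 1 s)
    have e1 : R (ixIdx' K j0) (ixIdx' K k0) = 0 := hRcol _ k0
    have e2 : Q (ixIdx' K k0) (ixIdx' K j0) (ixIdx' K j0) = 0 := hQcol _ j0
    have e3 : R (ixIdx' K k0) (ixIdx' K j0) = 0 := hRcol _ j0
    have e4 : c (ixIdx' K k0) = 0 := hc0 _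
    have hfin : 2 * a j0 * (Q (ixIdx' K j0) (ixIdx' K j0) (ixIdx' K k0)
        + Q (ixIdx' K j0) (ixIdx' K k0) (ixIdx' K j0)) = 0 := by
      linear_combination q.2.2.1 - 2 * a j0 * e1 - 2 * a k0 * e2 - 2 * a k0 * e3
        - 2 * a k0 * e4
    exact cancel_pos' (by linarith [hapos j0] : (0 : ℝ) < 2 * a j0) hfin
  -- step 5: triple x coefficients
  have hT : ∀ j0 k0 l0 : Fin K, j0 ≠ k0 → j0 ≠ l0 → k0 ≠ l0 →
      Q (ixIdx' K j0) (ixIdx' K k0) (ixIdx' K l0)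
        + Q (ixIdx' K j0) (ixIdx' K l0) (ixIdx' K k0) = 0 := by
    intro j0 k0 l0 h1 h2 h3
    have hjk : ixIdx' K j0 ≠ ixIdx' K k0 := fun hh => h1 (hinj hh)
    have hjl : ixIdx' K j0 ≠ ixIdx' K l0 := fun hh => h2 (hinj hh)
    have hkl : ixIdx' K k0 ≠ ixIdx' K l0 := fun hh => h3 (hinj hh)
    have hexp : ∀ t s u : ℝ,
        2 * a j0 * t * (Q (ixIdx' K j0) (ixIdx' K j0) (ixIdx' K j0) * t ^ 2
          + (Q (ixIdx' K j0) (ixIdx' K j0) (ixIdx' K k0)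
              + Q (ixIdx' K j0) (ixIdx' K k0) (ixIdx' K j0)) * (t * s)
          + (Q (ixIdx' K j0) (ixIdx' K j0) (ixIdx' K l0)
              + Q (ixIdx' K j0) (ixIdx' K l0) (ixIdx' K j0)) * (t * u)
          + Q (ixIdx' K j0) (ixIdx' K k0) (ixIdx' K k0) * s ^ 2
          + (Q (ixIdx' K j0) (ixIdx' K k0) (ixIdx' K l0)
              + Q (ixIdx' K j0) (ixIdx' K l0) (ixIdx' K k0)) * (s * u)
          + Q (ixIdx' K j0) (ixIdx' K l0) (ixIdx' K l0) * u ^ 2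
          + R (ixIdx' K j0) (ixIdx' K j0) * t + R (ixIdx' K j0) (ixIdx' K k0) * s
          + R (ixIdx' K j0) (ixIdx' K l0) * u + c (ixIdx' K j0))
        + 2 * a k0 * s * (Q (ixIdx' K k0) (ixIdx' K j0) (ixIdx' K j0) * t ^ 2
          + (Q (ixIdx' K k0) (ixIdx' K j0) (ixIdx' K k0)
              + Q (ixIdx' K k0) (ixIdx' K k0) (ixIdx' K j0)) * (t * s)
          + (Q (ixIdx' K k0) (ixIdx' K j0) (ixIdx' K l0)
              + Q (ixIdx' K k0) (ixIdx' K l0) (ixIdx' K j0)) * (t * u)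
          + Q (ixIdx' K k0) (ixIdx' K k0) (ixIdx' K k0) * s ^ 2
          + (Q (ixIdx' K k0) (ixIdx' K k0) (ixIdx' K l0)
              + Q (ixIdx' K k0) (ixIdx' K l0) (ixIdx' K k0)) * (s * u)
          + Q (ixIdx' K k0) (ixIdx' K l0) (ixIdx' K l0) * u ^ 2
          + R (ixIdx' K k0) (ixIdx' K j0) * t + R (ixIdx' K k0) (ixIdx' K k0) * s
          + R (ixIdx' K k0) (ixIdx' K l0) * u + c (ixIdx' K k0))
        + 2 * a l0 * u * (Q (ixIdx' K l0) (ixIdx' K j0) (ixIdx' K j0) * t ^ 2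
          + (Q (ixIdx' K l0) (ixIdx' K j0) (ixIdx' K k0)
              + Q (ixIdx' K l0) (ixIdx' K k0) (ixIdx' K j0)) * (t * s)
          + (Q (ixIdx' K l0) (ixIdx' K j0) (ixIdx' K l0)
              + Q (ixIdx' K l0) (ixIdx' K l0) (ixIdx' K j0)) * (t * u)
          + Q (ixIdx' K l0) (ixIdx' K k0) (ixIdx' K k0) * s ^ 2
          + (Q (ixIdx' K l0) (ixIdx' K k0) (ixIdx' K l0)
              + Q (ixIdx' K l0) (ixIdx' K l0) (ixIdx' K k0)) * (s * u)
          + Q (ixIdx' K l0) (ixIdx' K l0) (ixIdx' K l0) * u ^ 2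
          + R (ixIdx' K l0) (ixIdx' K j0) * t + R (ixIdx' K l0) (ixIdx' K k0) * s
          + R (ixIdx' K l0) (ixIdx' K l0) * u + c (ixIdx' K l0)) = 0 := by
      intro t s u
      have h := hfiD j0 k0 l0 h1 h2 h3 t s u
      rw [evalP3 _ _ _ hjk hjl hkl, evalP3 _ _ _ hjk hjl hkl,
        evalP3 _ _ _ hjk hjl hkl] at h
      exact h
    have key : 2 * (a j0 * (Q (ixIdx' K j0) (ixIdx' K k0) (ixIdx' K l0)
          + Q (ixIdx' K j0) (ixIdx' K l0) (ixIdx' K k0))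
        + a k0 * (Q (ixIdx' K k0) (ixIdx' K j0) (ixIdx' K l0)
          + Q (ixIdx' K k0) (ixIdx' K l0) (ixIdx' K j0))
        + a l0 * (Q (ixIdx' K l0) (ixIdx' K j0) (ixIdx' K k0)
          + Q (ixIdx' K l0) (ixIdx' K k0) (ixIdx' K j0))) = 0 := by
      linear_combination (hexp 1 1 1 - hexp 1 1 (-1) - hexp 1 (-1) 1 + hexp 1 (-1) (-1)
        - hexp (-1) 1 1 + hexp (-1) 1 (-1) + hexp (-1) (-1) 1 - hexp (-1) (-1) (-1)) / 8
    have nn1 : 0 ≤ Q (ixIdx' K j0) (ixIdx' K k0) (ixIdx' K l0)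
        + Q (ixIdx' K j0) (ixIdx' K l0) (ixIdx' K k0) := hQ2 _ _ _ hjk.symm hjl.symm hkl
    have nn2 : 0 ≤ Q (ixIdx' K k0) (ixIdx' K j0) (ixIdx' K l0)
        + Q (ixIdx' K k0) (ixIdx' K l0) (ixIdx' K j0) := hQ2 _ _ _ hjk hkl.symm hjl
    have nn3 : 0 ≤ Q (ixIdx' K l0) (ixIdx' K j0) (ixIdx' K k0)
        + Q (ixIdx' K l0) (ixIdx' K k0) (ixIdx' K j0) := hQ2 _ _ _ hjl hkl hjk
    have e1 : a j0 * (Q (ixIdx' K j0) (ixIdx' K k0) (ixIdx' K l0)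
        + Q (ixIdx' K j0) (ixIdx' K l0) (ixIdx' K k0)) = 0 := by
      have m1 := mul_nonneg (hapos j0).le nn1
      have m2 := mul_nonneg (hapos k0).le nn2
      have m3 := mul_nonneg (hapos l0).le nn3
      linarith
    exact cancel_pos' (hapos j0) e1
  -- step 6: x-x-z mixed coefficients
  have hU : ∀ j0 k0 : Fin K, j0 ≠ k0 →
      Q (ixIdx' K j0) (ixIdx' K k0) (izIdx' K)
        + Q (ixIdx' K j0) (izIdx' K) (ixIdx' K k0) = 0 := by
    intro j0 k0 h0
    have hjk : ixIdx' K j0 ≠ ixIdx' K k0 := fun hh => h0 (hinj hh)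
    have hexp : ∀ t s u : ℝ,
        2 * a j0 * t * (Q (ixIdx' K j0) (ixIdx' K j0) (ixIdx' K j0) * t ^ 2
          + (Q (ixIdx' K j0) (ixIdx' K j0) (ixIdx' K k0)
              + Q (ixIdx' K j0) (ixIdx' K k0) (ixIdx' K j0)) * (t * s)
          + (Q (ixIdx' K j0) (ixIdx' K j0) (izIdx' K)
              + Q (ixIdx' K j0) (izIdx' K) (ixIdx' K j0)) * (t * u)
          + Q (ixIdx' K j0) (ixIdx' K k0) (ixIdx' K k0) * s ^ 2
          + (Q (ixIdx' K j0) (ixIdx' K k0) (izIdx' K)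
              + Q (ixIdx' K j0) (izIdx' K) (ixIdx' K k0)) * (s * u)
          + Q (ixIdx' K j0) (izIdx' K) (izIdx' K) * u ^ 2
          + R (ixIdx' K j0) (ixIdx' K j0) * t + R (ixIdx' K j0) (ixIdx' K k0) * s
          + R (ixIdx' K j0) (izIdx' K) * u + c (ixIdx' K j0))
        + 2 * a k0 * s * (Q (ixIdx' K k0) (ixIdx' K j0) (ixIdx' K j0) * t ^ 2
          + (Q (ixIdx' K k0) (ixIdx' K j0) (ixIdx' K k0)
              + Q (ixIdx' K k0) (ixIdx' K k0) (ixIdx' K j0)) * (t * s)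
          + (Q (ixIdx' K k0) (ixIdx' K j0) (izIdx' K)
              + Q (ixIdx' K k0) (izIdx' K) (ixIdx' K j0)) * (t * u)
          + Q (ixIdx' K k0) (ixIdx' K k0) (ixIdx' K k0) * s ^ 2
          + (Q (ixIdx' K k0) (ixIdx' K k0) (izIdx' K)
              + Q (ixIdx' K k0) (izIdx' K) (ixIdx' K k0)) * (s * u)
          + Q (ixIdx' K k0) (izIdx' K) (izIdx' K) * u ^ 2
          + R (ixIdx' K k0) (ixIdx' K j0) * t + R (ixIdx' K k0) (ixIdx' K k0) * s
          + R (ixIdx' K k0) (izIdx' K) * u + c (ixIdx' K k0)) = 0 := by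
      intro t s u
      have h := hfiE j0 k0 h0 t s u
      rw [evalP3 _ _ _ hjk (hne j0) (hne k0), evalP3 _ _ _ hjk (hne j0) (hne k0)] at h
      exact h
    have key : 2 * (a j0 * (Q (ixIdx' K j0) (ixIdx' K k0) (izIdx' K)
          + Q (ixIdx' K j0) (izIdx' K) (ixIdx' K k0))
        + a k0 * (Q (ixIdx' K k0) (ixIdx' K j0) (izIdx' K)
          + Q (ixIdx' K k0) (izIdx' K) (ixIdx' K j0))) = 0 := by
      linear_combination (hexp 1 1 1 - hexp 1 1 (-1) - hexp 1 (-1) 1 + hexp 1 (-1) (-1)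
        - hexp (-1) 1 1 + hexp (-1) 1 (-1) + hexp (-1) (-1) 1 - hexp (-1) (-1) (-1)) / 8
    have nn1 : 0 ≤ Q (ixIdx' K j0) (ixIdx' K k0) (izIdx' K)
        + Q (ixIdx' K j0) (izIdx' K) (ixIdx' K k0) :=
      hQ2 _ _ _ hjk.symm (hne j0).symm (hne k0)
    have nn2 : 0 ≤ Q (ixIdx' K k0) (ixIdx' K j0) (izIdx' K)
        + Q (ixIdx' K k0) (izIdx' K) (ixIdx' K j0) :=
      hQ2 _ _ _ hjk (hne k0).symm (hne j0)
    have e1 : a j0 * (Q (ixIdx' K j0) (ixIdx' K k0) (izIdx' K)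
        + Q (ixIdx' K j0) (izIdx' K) (ixIdx' K k0)) = 0 := by
      have m1 := mul_nonneg (hapos j0).le nn1
      have m2 := mul_nonneg (hapos k0).le nn2
      linarith
    exact cancel_pos' (hapos j0) e1
  -- all symmetrized quadratic coefficients of x-equations vanish
  have hQsym : ∀ (k0 : Fin K) (j l : Fin (K + 1)),
      Q (ixIdx' K k0) j l + Q (ixIdx' K k0) l j = 0 := by
    intro k0 j l
    rcases hcase j with rfl | ⟨j0, rfl⟩
    · rcases hcase l with rfl | ⟨l0, rfl⟩
      · have := (hstep3 k0).2.1; linarith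
      · rcases eq_or_ne l0 k0 with h | h
        · rw [h]; have := (hstep3 k0).1; linarith
        · have := hU k0 l0 h.symm; linarith
    · rcases hcase l with rfl | ⟨l0, rfl⟩
      · rcases eq_or_ne j0 k0 with h | h
        · rw [h]; have := (hstep3 k0).1; linarith
        · have := hU k0 j0 h.symm; linarith
      · rcases eq_or_ne j0 l0 with h | hjl
        · rw [h]; have := hQcol (ixIdx' K k0) l0; linarith
        · rcases eq_or_ne j0 k0 with h | hjk
          · rw [h]
            have hkl : k0 ≠ l0 := fun e => hjl (h.trans e)
            exact hSx k0 l0 hkl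
          · rcases eq_or_ne l0 k0 with h | hlk
            · rw [h]; have := hSx k0 j0 hjk.symm; linarith
            · have := hT k0 j0 l0 hjk.symm hlk.symm hjl; linarith
  have hRall : ∀ (k0 : Fin K) (j : Fin (K + 1)), R (ixIdx' K k0) j = 0 := by
    intro k0 j
    rcases hcase j with rfl | ⟨j0, rfl⟩
    · exact (hstep3 k0).2.2
    · exact hRcol _ j0
  -- x-equations vanish identically
  have hPx : ∀ (k0 : Fin K) (x : Fin (K + 1) → ℝ), P (ixIdx' K k0) x = 0 := by
    intro k0 x
    have h1 : ∑ m, R (ixIdx' K k0) m * x m = 0 :=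
      Finset.sum_eq_zero fun m _ => by rw [hRall k0 m, zero_mul]
    have h2 : ∑ m, ∑ l, Q (ixIdx' K k0) m l * x m * x l = 0 := by
      have hsw : (∑ m, ∑ l, Q (ixIdx' K k0) m l * x m * x l)
          = ∑ m, ∑ l, Q (ixIdx' K k0) l m * x m * x l := by
        rw [Finset.sum_comm]
        exact Finset.sum_congr rfl fun m _ => Finset.sum_congr rfl fun l _ => by ring
      have h4 : (∑ m, ∑ l, Q (ixIdx' K k0) m l * x m * x l)
          + ∑ m, ∑ l, Q (ixIdx' K k0) m l * x m * x l = 0 := by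
        nth_rewrite 2 [hsw]
        calc (∑ m, ∑ l, Q (ixIdx' K k0) m l * x m * x l)
            + ∑ m, ∑ l, Q (ixIdx' K k0) l m * x m * x l
            = ∑ m, ∑ l, (Q (ixIdx' K k0) m l + Q (ixIdx' K k0) l m) * x m * x l := by
              rw [← Finset.sum_add_distrib]
              exact Finset.sum_congr rfl fun m _ => by
                rw [← Finset.sum_add_distrib]
                exact Finset.sum_congr rfl fun l _ => by ring
          _ = 0 := Finset.sum_eq_zero fun m _ => Finset.sum_eq_zero fun l _ => by
              rw [hQsym k0 m l, zero_mul, zero_mul]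
      linarith
    rw [hP, h1, h2, hc0]
    ring
  -- conclusion
  intro i x
  rcases hcase i with rfl | ⟨k0, rfl⟩
  · have h := hmc x
    rw [sum_one'' (izIdx' K) (fun m => ϱ m * P m x)
        (fun m hm => by
          rcases hcase m with rfl | ⟨k0, rfl⟩
          · exact absurd rfl hm
          · simp [hPx k0 x])] at h
    exact cancel_pos' (hϱ _) h
  · exact hPx k0 x
end
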